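/- arXiv:2004.14097 — 8 statements merged into one kernel-verified Lean document; each statement's English description precedes it below -/
import Mathlib

section
/- Let K ⊆ ℝ^n be an origin-symmetric convex body and let L ⊆ ℝ^n be a k-dimensional linear subspace with dim(span(L ∩ ℤ^n)) = k, where 0 ≤ k ≤ n-1. Then for every t ∈ ℝ^n, #(K ∩ (t + L)) ≤ 2^k · #(K ∩ L). -/
open scoped BigOperators
open Submodule Module

/-- The submodule of integer-coordinate vectors. -/
def latP (n : ℕ) : Submodule ℤ (Fin n → ℝ) where
  carrier := {x : Fin n → ℝ | ∀ i, ∃ z : ℤ, x i = (z : ℝ)}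
  add_mem' := by
    rintro a b ha hb i
    obtain ⟨za, hza⟩ := ha i; obtain ⟨zb, hzb⟩ := hb i
    exact ⟨za + zb, by rw [Pi.add_apply, hza, hzb]; push_cast; ring⟩
  zero_mem' := fun i => ⟨0, by simp⟩
  smul_mem' := by
    rintro c x hx i
    obtain ⟨z, hz⟩ := hx i
    exact ⟨c * z, by rw [Pi.smul_apply, hz]; push_cast; simp⟩

lemma latP_eq (n : ℕ) :
    latP n = Submodule.span ℤ (Set.range (Pi.basisFun ℝ (Fin n))) := by
  apply le_antisymm
  · intro x hx
    choose z hz using hx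
    have : x = ∑ i, z i • Pi.basisFun ℝ (Fin n) i := by
      funext j
      rw [Finset.sum_apply]
      simp [Pi.basisFun_apply, Pi.single_apply, hz j]
    rw [this]
    exact Submodule.sum_mem _ fun i _ =>
      Submodule.smul_mem _ _ (Submodule.subset_span ⟨i, rfl⟩)
  · rw [Submodule.span_le]
    rintro x ⟨i, rfl⟩ j
    refine ⟨if j = i then 1 else 0, ?_⟩
    simp [Pi.basisFun_apply, Pi.single_apply]

instance latP_discrete (n : ℕ) : DiscreteTopology (latP n) := by
  rw [latP_eq]
  infer_instance

lemma finrank_lattice {n : ℕ} (Λ : Submodule ℤ (Fin n → ℝ)) [DiscreteTopology Λ] :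
    Module.finrank ℤ Λ = Module.finrank ℝ (Submodule.span ℝ (Λ : Set (Fin n → ℝ))) := by
  set F : Submodule ℝ (Fin n → ℝ) := Submodule.span ℝ (Λ : Set (Fin n → ℝ)) with hF
  let f : F →ₗ[ℝ] (Fin n → ℝ) := F.subtype
  let Λ₀ : Submodule ℤ F := Λ.comap (f.restrictScalars ℤ)
  have h_img : f '' Λ₀ = (Λ : Set (Fin n → ℝ)) := by
    rw [← LinearMap.coe_restrictScalars ℤ f, ← Submodule.map_coe (f.restrictScalars ℤ),
      Submodule.map_comap_eq_self]
    exact fun x hx ↦ LinearMap.mem_range.mpr ⟨⟨x, Submodule.subset_span hx⟩, rfl⟩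
  haveI : DiscreteTopology Λ₀ := by
    have h := DiscreteTopology.preimage_of_continuous_injective
      (Λ : Set (Fin n → ℝ)) (f := fun x : F => (x : Fin n → ℝ))
      continuous_subtype_val Subtype.val_injective
    exact h
  haveI : IsZLattice ℝ Λ₀ := ⟨by
    rw [← (Submodule.map_injective_of_injective (injective_subtype F)).eq_iff,
      Submodule.map_span, Submodule.map_top, range_subtype]
    have : F.subtype '' Λ₀ = (Λ : Set (Fin n → ℝ)) := h_img
    rw [this, ← hF]⟩
  have hr := ZLattice.rank ℝ Λ₀
  have he : Λ₀ ≃ₗ[ℤ] Λ :=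
    Submodule.comapSubtypeEquivOfLe (p := Λ) (q := F.restrictScalars ℤ)
      (fun x hx => Submodule.subset_span hx)
  rw [← hr, he.symm.finrank_eq]


open scoped BigOperators

/-- The lattice point enumerator: the number of integer points in `A ⊆ ℝ^n`. -/
noncomputable def latCount {n : ℕ} (A : Set (Fin n → ℝ)) : ℕ :=
  (A ∩ {x : Fin n → ℝ | ∀ i, ∃ z : ℤ, x i = (z : ℝ)}).ncard

/-- Discrete Brunn-type concavity principle: if `K ⊆ ℝ^n` is an origin-symmetric
convex body and `L` is a `k`-dimensional lattice subspace (`0 ≤ k ≤ n-1`), then for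
any translation `t`, `#(K ∩ (t + L)) ≤ 2^k #(K ∩ L)`. -/
theorem discrete_brunn (n k : ℕ) (hk : k ≤ n - 1) (K : Set (Fin n → ℝ))
    (hconv : Convex ℝ K) (hcomp : IsCompact K) (hne : K.Nonempty) (hsym : K = -K)
    (L : Submodule ℝ (Fin n → ℝ)) (hL : Module.finrank ℝ L = k)
    (hlat : Module.finrank ℝ
      (Submodule.span ℝ ((L : Set (Fin n → ℝ)) ∩ {x | ∀ i, ∃ z : ℤ, x i = (z : ℝ)})) = k)
    (t : Fin n → ℝ) :
    latCount (K ∩ ((fun x => t + x) '' (L : Set (Fin n → ℝ)))) ≤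
      2 ^ k * latCount (K ∩ (L : Set (Fin n → ℝ))) := by
  classical
  set P : Set (Fin n → ℝ) := {x : Fin n → ℝ | ∀ i, ∃ z : ℤ, x i = (z : ℝ)} with hPdef
  set S : Set (Fin n → ℝ) := (K ∩ ((fun x => t + x) '' (L : Set (Fin n → ℝ)))) ∩ P with hSdef
  set T : Set (Fin n → ℝ) := (K ∩ (L : Set (Fin n → ℝ))) ∩ P with hTdef
  have hgoal : latCount (K ∩ ((fun x => t + x) '' (L : Set (Fin n → ℝ)))) = S.ncard := rfl
  have hgoal2 : latCount (K ∩ (L : Set (Fin n → ℝ))) = T.ncard := rfl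
  rw [hgoal, hgoal2]
  rcases S.eq_empty_or_nonempty with hS | ⟨x0, hx0⟩
  · rw [hS, Set.ncard_empty]; exact Nat.zero_le _
  -- the lattice Λ = L ∩ ℤ^n
  set Λ : Submodule ℤ (Fin n → ℝ) := (L.restrictScalars ℤ) ⊓ latP n with hΛdef
  haveI hdisc : DiscreteTopology Λ :=
    DiscreteTopology.of_subset (latP_discrete n) (fun x hx => hx.2)
  have hrk : Module.finrank ℤ Λ = k := by
    rw [finrank_lattice Λ]
    exact hlat
  -- finiteness
  have hKP : (K ∩ P).Finite := by
    haveI : DiscreteTopology ((latP n).toAddSubgroup : Set (Fin n → ℝ)) := latP_discrete n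
    have := Metric.finite_isBounded_inter_isClosed (K := K)
      (s := ((latP n).toAddSubgroup : Set (Fin n → ℝ))) DiscreteTopology.isDiscrete hcomp.isBounded
      AddSubgroup.isClosed_of_discrete
    exact this
  have hSfin : S.Finite := hKP.subset (fun x hx => ⟨hx.1.1, hx.2⟩)
  have hTfin : T.Finite := hKP.subset (fun x hx => ⟨hx.1.1, hx.2⟩)
  -- differences of points of S lie in Λ
  have hmemΛ : ∀ x ∈ S, ∀ y ∈ S, x - y ∈ Λ := by
    rintro x ⟨⟨hxK, a, ha, rfl⟩, hxP⟩ y ⟨⟨hyK, c, hc, rfl⟩, hyP⟩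
    constructor
    · show t + a - (t + c) ∈ L
      have : t + a - (t + c) = a - c := by abel
      rw [this]; exact sub_mem ha hc
    · intro i
      obtain ⟨zx, hzx⟩ := hxP i
      obtain ⟨zy, hzy⟩ := hyP i
      exact ⟨zx - zy, by rw [Pi.sub_apply, hzx, hzy]; push_cast; ring⟩
  set r := Module.finrank ℤ Λ with hrdef
  let b : Basis (Fin r) ℤ Λ := Module.finBasis ℤ Λ
  let cc : S → (Fin r → ZMod 2) :=
    fun x i => ((b.repr ⟨x.1 - x0, hmemΛ _ x.2 _ hx0⟩) i : ZMod 2)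
  have hkey : ∀ x y : S, cc x = cc y →
      ∃ u : T, (x : Fin n → ℝ) = (y : Fin n → ℝ) + (2 : ℝ) • (u : Fin n → ℝ) := by
    intro x y hxy
    set a : Λ := ⟨x.1 - x0, hmemΛ _ x.2 _ hx0⟩ with ha
    set c : Λ := ⟨y.1 - x0, hmemΛ _ y.2 _ hx0⟩ with hc
    set w : Λ := ⟨x.1 - y.1, hmemΛ _ x.2 _ y.2⟩ with hw
    have hwac : w = a - c := Subtype.ext (by show x.1 - y.1 = (x.1 - x0) - (y.1 - x0); abel)
    have hdvd : ∀ i, (2 : ℤ) ∣ (b.repr w) i := by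
      intro i
      have h1 : ((b.repr a i : ZMod 2)) = (b.repr c i : ZMod 2) := congrFun hxy i
      have h2 := (ZMod.intCast_eq_intCast_iff _ _ _).mp h1
      have h3 : (2 : ℤ) ∣ (b.repr a i - b.repr c i) := Int.ModEq.dvd h2.symm
      rw [hwac, map_sub, Finsupp.sub_apply]
      exact_mod_cast h3
    set u' : Λ := b.repr.symm ((b.repr w).mapRange (fun z => z / 2) (by simp)) with hu'
    have h2u : (2 : ℤ) • u' = w := by
      apply b.repr.injective
      rw [map_smul, hu', LinearEquiv.apply_symm_apply]
      ext i
      rw [Finsupp.smul_apply, Finsupp.mapRange_apply, smul_eq_mul]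
      exact Int.mul_ediv_cancel' (hdvd i)
    have h2u' : (2 : ℝ) • (u' : Fin n → ℝ) = x.1 - y.1 := by
      have hcoe := congrArg (Subtype.val) h2u
      have : ((2 : ℤ) • u' : Λ).1 = (2 : ℤ) • (u'.1) := rfl
      rw [this] at hcoe
      rw [show ((2 : ℝ) • (u' : Fin n → ℝ)) = (2 : ℤ) • (u'.1) by
        rw [← Int.cast_smul_eq_zsmul ℝ]; norm_num]
      exact hcoe
    have hu'L : u'.1 ∈ (L : Set (Fin n → ℝ)) := u'.2.1
    have hu'P : u'.1 ∈ P := u'.2.2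
    have hmid : u'.1 = (1/2 : ℝ) • x.1 + (1/2 : ℝ) • (-y.1) := by
      have h5 : u'.1 = (1/2 : ℝ) • (x.1 - y.1) := by
        rw [← h2u', smul_smul]; norm_num
      rw [h5, sub_eq_add_neg, smul_add]
    have hu'K : u'.1 ∈ K := by
      have hxK : x.1 ∈ K := x.2.1.1
      have hyK : y.1 ∈ K := y.2.1.1
      have hnegy : -y.1 ∈ K := by
        rw [hsym]; exact Set.neg_mem_neg.mpr hyK
      have := hconv hxK hnegy (by norm_num : (0:ℝ) ≤ 1/2) (by norm_num : (0:ℝ) ≤ 1/2)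
        (by norm_num : (1/2 : ℝ) + 1/2 = 1)
      rwa [hmid]
    refine ⟨⟨u'.1, ⟨hu'K, hu'L⟩, hu'P⟩, ?_⟩
    show x.1 = y.1 + (2:ℝ) • u'.1
    rw [h2u']; abel
  -- build the injection
  haveI hTfinite : Finite ↥T := hTfin.to_subtype
  let rep : (Fin r → ZMod 2) → S := fun q =>
    if h : ∃ x : S, cc x = q then h.choose else ⟨x0, hx0⟩
  have hrep : ∀ x : S, cc (rep (cc x)) = cc x := by
    intro x
    have h : ∃ y : S, cc y = cc x := ⟨x, rfl⟩
    show cc (dite _ _ _) = cc x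
    rw [dif_pos h]
    exact h.choose_spec
  let G : S → (Fin r → ZMod 2) × ↥T := fun x =>
    (cc x, (hkey x (rep (cc x)) (hrep x).symm).choose)
  have hGspec : ∀ x : S, (x : Fin n → ℝ) =
      (rep (cc x) : Fin n → ℝ) + (2:ℝ) • ((G x).2 : Fin n → ℝ) :=
    fun x => (hkey x (rep (cc x)) (hrep x).symm).choose_spec
  have hGinj : Function.Injective G := by
    intro x y hGxy
    have h1 : cc x = cc y := congrArg Prod.fst hGxy
    have h2 := hGspec x
    have h3 := hGspec y
    rw [h1] at h2
    rw [← congrArg Prod.snd hGxy] at h3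
    exact Subtype.ext (h2.trans h3.symm)
  have hcard : Nat.card ↥S ≤ Nat.card ((Fin r → ZMod 2) × ↥T) :=
    Nat.card_le_card_of_injective G hGinj
  rw [← Nat.card_coe_set_eq, ← Nat.card_coe_set_eq, ← hrk]
  calc Nat.card ↥S ≤ Nat.card ((Fin r → ZMod 2) × ↥T) := hcard
    _ = 2 ^ r * Nat.card ↥T := by
        rw [Nat.card_prod, Nat.card_eq_fintype_card]
        congr 1
        rw [Fintype.card_fun]
        simp
end

section
/- Let n ≥ 3. For every constant c > 0 there exists a convex body K ⊆ ℝ^n such that #(K)^{n-1} < c^n · ∏_{i=1}^n #(K ∩ e_i^⊥); equivalently, #(K)^{(n-1)/n} < c (∏_{i=1}^n #(K ∩ e_i^⊥))^{1/n}. In particular, no constant c > 0 satisfies #(K)^{(n-1)/n} ≥ c (∏_{i=1}^n #(K ∩ e_i^⊥))^{1/n} for all convex bodies K ⊆ ℝ^n. -/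
open scoped BigOperators

/-- In dimension `n ≥ 3` there is no discrete Meyer inequality for general convex
bodies: for every `c > 0` there is a convex body `K ⊆ ℝ^n` with
`#(K)^{n-1} < c^n ∏ᵢ #(K ∩ eᵢ^⊥)`. -/
theorem no_discrete_meyer_general (n : ℕ) (hn : 3 ≤ n) (c : ℝ) (hc : 0 < c) :
    ∃ K : Set (Fin n → ℝ), Convex ℝ K ∧ IsCompact K ∧ K.Nonempty ∧
      (latCount K : ℝ) ^ (n - 1) <
        c ^ n * ∏ i : Fin n, (latCount (K ∩ {x : Fin n → ℝ | x i = 0}) : ℝ) := by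
  classical
  obtain ⟨m, hm⟩ := exists_nat_gt ((2:ℝ) ^ (n-1) / c ^ n)
  have hcn : (0:ℝ) < c ^ n := pow_pos hc n
  have hmR : (0:ℝ) < m := lt_trans (div_pos (pow_pos two_pos _) hcn) hm
  have hm1 : 1 ≤ m := by exact_mod_cast Nat.one_le_iff_ne_zero.mpr (by
    intro h; rw [h] at hmR; simp at hmR)
  set i0 : Fin n := ⟨0, by omega⟩ with hi0
  set i1 : Fin n := ⟨1, by omega⟩ with hi1
  set i2 : Fin n := ⟨2, by omega⟩ with hi2
  have h01 : i0 ≠ i1 := by simp [hi0, hi1, Fin.ext_iff]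
  have h02 : i0 ≠ i2 := by simp [hi0, hi2, Fin.ext_iff]
  have h12 : i1 ≠ i2 := by simp [hi1, hi2, Fin.ext_iff]
  set L : Set (Fin n → ℝ) := {x | ∀ i, ∃ z : ℤ, x i = (z:ℝ)} with hL
  set K : Set (Fin n → ℝ) := {x | (∀ i, i ≠ i0 → i ≠ i1 → i ≠ i2 → x i = 0) ∧
      0 ≤ x i0 ∧ 0 ≤ x i1 ∧ 0 ≤ x i2 ∧ x i2 ≤ 1 ∧
      x i0 ≤ m * x i2 ∧ x i1 ≤ m * (1 - x i2)} with hKdef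
  -- the two segments of lattice points
  set p2 : ℕ → (Fin n → ℝ) := fun t i => if i = i1 then (t:ℝ) else 0 with hp2
  set p1 : ℕ → (Fin n → ℝ) := fun s i => if i = i0 then (s:ℝ) else if i = i2 then 1 else 0 with hp1
  -- evaluation lemmas
  have e2a : ∀ t : ℕ, p2 t i1 = (t:ℝ) := by intro t; simp [hp2]
  have e2b : ∀ (t : ℕ) (i : Fin n), i ≠ i1 → p2 t i = 0 := by
    intro t i hi; simp [hp2, hi]
  have e1a : ∀ s : ℕ, p1 s i0 = (s:ℝ) := by intro s; simp [hp1]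
  have e1c : ∀ s : ℕ, p1 s i2 = 1 := by
    intro s; simp [hp1, Ne.symm h02]
  have e1b : ∀ (s : ℕ) (i : Fin n), i ≠ i0 → i ≠ i2 → p1 s i = 0 := by
    intro s i hi hi'; simp [hp1, hi, hi']
  have hp2K : ∀ t : ℕ, t ≤ m → p2 t ∈ K := by
    intro t ht
    refine ⟨?_, ?_, ?_, ?_, ?_, ?_, ?_⟩
    · intro i _ hb _; exact e2b t i hb
    · rw [e2b t i0 h01]
    · rw [e2a t]; positivity
    · rw [e2b t i2 (Ne.symm h12)]
    · rw [e2b t i2 (Ne.symm h12)]; norm_num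
    · rw [e2b t i0 h01, e2b t i2 (Ne.symm h12)]; norm_num
    · rw [e2a t, e2b t i2 (Ne.symm h12)]
      have : ((t:ℝ)) ≤ (m:ℝ) := by exact_mod_cast ht
      linarith
  have hp1K : ∀ s : ℕ, s ≤ m → p1 s ∈ K := by
    intro s hs
    refine ⟨?_, ?_, ?_, ?_, ?_, ?_, ?_⟩
    · intro i ha _ hcc; exact e1b s i ha hcc
    · rw [e1a s]; positivity
    · rw [e1b s i1 (Ne.symm h01) h12]
    · rw [e1c s]; norm_num
    · rw [e1c s]
    · rw [e1a s, e1c s]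
      have : ((s:ℝ)) ≤ (m:ℝ) := by exact_mod_cast hs
      linarith
    · rw [e1b s i1 (Ne.symm h01) h12, e1c s]; norm_num
  have hp2L : ∀ t : ℕ, p2 t ∈ L := by
    intro t i
    by_cases h : i = i1
    · exact ⟨t, by rw [h, e2a]; norm_cast⟩
    · exact ⟨0, by rw [e2b t i h]; norm_num⟩
  have hp1L : ∀ s : ℕ, p1 s ∈ L := by
    intro s i
    by_cases h : i = i0
    · exact ⟨s, by rw [h, e1a]; norm_cast⟩
    · by_cases h' : i = i2
      · exact ⟨1, by rw [h', e1c]; norm_num⟩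
      · exact ⟨0, by rw [e1b s i h h']; norm_num⟩
  have hp2inj : Function.Injective p2 := by
    intro a b hab
    have := congrFun hab i1
    rw [e2a, e2a] at this
    exact_mod_cast this
  have hp1inj : Function.Injective p1 := by
    intro a b hab
    have := congrFun hab i0
    rw [e1a, e1a] at this
    exact_mod_cast this
  set F : Finset (Fin n → ℝ) :=
    (Finset.range (m+1)).image p2 ∪ (Finset.range (m+1)).image p1 with hF
  -- K ∩ L ⊆ F
  have hsub : K ∩ L ⊆ ↑F := by
    rintro x ⟨hxK, hxL⟩
    obtain ⟨hzero, h00, h11, h22, h2le, hle0, hle1⟩ := hxK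
    obtain ⟨z2, hz2⟩ := hxL i2
    have hz2a : (0:ℤ) ≤ z2 := by exact_mod_cast hz2 ▸ h22
    have hz2b : z2 ≤ 1 := by exact_mod_cast hz2 ▸ h2le
    have hcase : z2 = 0 ∨ z2 = 1 := by omega
    rcases hcase with h | h
    · -- x i2 = 0 : x lies on the segment along e_{i1}
      have hx2 : x i2 = 0 := by rw [hz2, h]; norm_num
      have hx0 : x i0 = 0 := le_antisymm (by rw [hx2] at hle0; linarith) h00
      obtain ⟨z1, hz1⟩ := hxL i1
      have hz1a : (0:ℤ) ≤ z1 := by exact_mod_cast hz1 ▸ h11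
      have hz1b : (z1:ℝ) ≤ m := by
        have h' := hle1; rw [hx2] at h'; rw [← hz1]; linarith
      have hz1b' : z1 ≤ (m:ℤ) := by exact_mod_cast hz1b
      have hxeq : x = p2 z1.toNat := by
        funext i
        by_cases hA : i = i1
        · have hcast : ((z1.toNat : ℕ) : ℝ) = (z1:ℝ) := by
            exact_mod_cast congrArg (fun z : ℤ => (z:ℝ)) (Int.toNat_of_nonneg hz1a)
          rw [hA, e2a, hcast]; exact hz1
        · rw [e2b _ i hA]
          by_cases hB : i = i0
          · rw [hB, hx0]
          · by_cases hC : i = i2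
            · rw [hC, hx2]
            · exact hzero i hB hA hC
      refine Finset.mem_coe.mpr (Finset.mem_union_left _ ?_)
      exact Finset.mem_image.mpr ⟨z1.toNat, Finset.mem_range.mpr (by omega), hxeq.symm⟩
    · -- x i2 = 1 : x lies on the segment along e_{i0} at height 1
      have hx2 : x i2 = 1 := by rw [hz2, h]; norm_num
      have hx1 : x i1 = 0 := by
        have h' := hle1; rw [hx2] at h'; simp at h'; linarith
      obtain ⟨z0, hz0⟩ := hxL i0
      have hz0a : (0:ℤ) ≤ z0 := by exact_mod_cast hz0 ▸ h00
      have hz0b : (z0:ℝ) ≤ m := by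
        have h' := hle0; rw [hx2] at h'; rw [← hz0]; linarith
      have hz0b' : z0 ≤ (m:ℤ) := by exact_mod_cast hz0b
      have hxeq : x = p1 z0.toNat := by
        funext i
        by_cases hA : i = i0
        · have hcast : ((z0.toNat : ℕ) : ℝ) = (z0:ℝ) := by
            exact_mod_cast congrArg (fun z : ℤ => (z:ℝ)) (Int.toNat_of_nonneg hz0a)
          rw [hA, e1a, hcast]; exact hz0
        · by_cases hC : i = i2
          · rw [hC, e1c, hx2]
          · rw [e1b _ i hA hC]
            by_cases hB : i = i1
            · rw [hB, hx1]
            · exact hzero i hA hB hC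
      refine Finset.mem_coe.mpr (Finset.mem_union_right _ ?_)
      exact Finset.mem_image.mpr ⟨z0.toNat, Finset.mem_range.mpr (by omega), hxeq.symm⟩
  have hKL_fin : (K ∩ L).Finite := Set.Finite.subset F.finite_toSet hsub
  -- upper bound for latCount K
  have hub : latCount K ≤ 2 * m + 2 := by
    have h1 : (K ∩ L).ncard ≤ F.card := by
      have := Set.ncard_le_ncard hsub F.finite_toSet
      rwa [Set.ncard_coe_finset] at this
    have h2 : F.card ≤ 2 * m + 2 := by
      calc F.card ≤ ((Finset.range (m+1)).image p2).card + ((Finset.range (m+1)).image p1).card :=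
            Finset.card_union_le _ _
        _ ≤ (m+1) + (m+1) := by
            gcongr <;> exact le_trans (Finset.card_image_le) (by simp)
        _ = 2 * m + 2 := by ring
    exact le_trans h1 h2
  -- lower bound for the sections
  have hsec : ∀ i : Fin n, m + 1 ≤ latCount (K ∩ {x : Fin n → ℝ | x i = 0}) := by
    intro i
    have hfin : ((K ∩ {x : Fin n → ℝ | x i = 0}) ∩ L).Finite :=
      hKL_fin.subset (by intro x hx; exact ⟨hx.1.1, hx.2⟩)
    by_cases hI : i = i1
    · -- use the p1 points, which have i1-coordinate 0
      set G : Finset (Fin n → ℝ) := (Finset.range (m+1)).image p1 with hG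
      have hGsub : ↑G ⊆ (K ∩ {x : Fin n → ℝ | x i = 0}) ∩ L := by
        intro x hx
        obtain ⟨s, hs, rfl⟩ := Finset.mem_image.mp (Finset.mem_coe.mp hx)
        have hs' : s ≤ m := by
          have := Finset.mem_range.mp hs; omega
        refine ⟨⟨hp1K s hs', ?_⟩, hp1L s⟩
        show p1 s i = 0
        rw [hI]; exact e1b s i1 (Ne.symm h01) h12
      have hcard : G.card = m + 1 := by
        rw [hG, Finset.card_image_of_injective _ hp1inj, Finset.card_range]
      calc m + 1 = G.card := hcard.symm
        _ = (↑G : Set (Fin n → ℝ)).ncard := (Set.ncard_coe_finset G).symm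
        _ ≤ ((K ∩ {x : Fin n → ℝ | x i = 0}) ∩ L).ncard := Set.ncard_le_ncard hGsub hfin
    · -- use the p2 points, which have zero coordinates away from i1
      set G : Finset (Fin n → ℝ) := (Finset.range (m+1)).image p2 with hG
      have hGsub : ↑G ⊆ (K ∩ {x : Fin n → ℝ | x i = 0}) ∩ L := by
        intro x hx
        obtain ⟨t, ht, rfl⟩ := Finset.mem_image.mp (Finset.mem_coe.mp hx)
        have ht' : t ≤ m := by
          have := Finset.mem_range.mp ht; omega
        refine ⟨⟨hp2K t ht', ?_⟩, hp2L t⟩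
        show p2 t i = 0
        exact e2b t i hI
      have hcard : G.card = m + 1 := by
        rw [hG, Finset.card_image_of_injective _ hp2inj, Finset.card_range]
      calc m + 1 = G.card := hcard.symm
        _ = (↑G : Set (Fin n → ℝ)).ncard := (Set.ncard_coe_finset G).symm
        _ ≤ ((K ∩ {x : Fin n → ℝ | x i = 0}) ∩ L).ncard := Set.ncard_le_ncard hGsub hfin
  -- convexity
  have hconv : Convex ℝ K := by
    rw [hKdef]
    intro x hx y hy a b ha hb hab
    simp only [Set.mem_setOf_eq] at hx hy
    obtain ⟨hx0, hx1, hx2, hx3, hx4, hx5, hx6⟩ := hx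
    obtain ⟨hy0, hy1, hy2, hy3, hy4, hy5, hy6⟩ := hy
    simp only [Set.mem_setOf_eq, Pi.add_apply, Pi.smul_apply, smul_eq_mul]
    have habm : (m:ℝ) * a + (m:ℝ) * b = (m:ℝ) := by rw [← mul_add, hab, mul_one]
    refine ⟨?_, ?_, ?_, ?_, ?_, ?_, ?_⟩
    · intro i ha1 hb1 hc1; rw [hx0 i ha1 hb1 hc1, hy0 i ha1 hb1 hc1]; ring
    · exact add_nonneg (mul_nonneg ha hx1) (mul_nonneg hb hy1)
    · exact add_nonneg (mul_nonneg ha hx2) (mul_nonneg hb hy2)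
    · exact add_nonneg (mul_nonneg ha hx3) (mul_nonneg hb hy3)
    · have h1 : a * x i2 ≤ a * 1 := mul_le_mul_of_nonneg_left hx4 ha
      have h2 : b * y i2 ≤ b * 1 := mul_le_mul_of_nonneg_left hy4 hb
      linarith
    · have h1 := mul_le_mul_of_nonneg_left hx5 ha
      have h2 := mul_le_mul_of_nonneg_left hy5 hb
      linarith
    · have h1 := mul_le_mul_of_nonneg_left hx6 ha
      have h2 := mul_le_mul_of_nonneg_left hy6 hb
      linarith
  -- compactness
  have hsubIcc : K ⊆ Set.Icc (fun _ => (0:ℝ)) (fun _ => (m:ℝ)) := by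
    rintro x ⟨hzero, h00, h11, h22, h2le, hle0, hle1⟩
    constructor <;> intro i
    · show (0:ℝ) ≤ x i
      by_cases hA : i = i0
      · rw [hA]; exact h00
      · by_cases hB : i = i1
        · rw [hB]; exact h11
        · by_cases hC : i = i2
          · rw [hC]; exact h22
          · rw [hzero i hA hB hC]
    · show x i ≤ (m:ℝ)
      by_cases hA : i = i0
      · rw [hA]; calc x i0 ≤ m * x i2 := hle0
          _ ≤ m * 1 := by nlinarith
          _ = m := mul_one _
      · by_cases hB : i = i1
        · rw [hB]; calc x i1 ≤ m * (1 - x i2) := hle1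
            _ ≤ m * 1 := by nlinarith
            _ = m := mul_one _
        · by_cases hC : i = i2
          · rw [hC]; calc x i2 ≤ 1 := h2le
              _ ≤ m := by exact_mod_cast hm1
          · rw [hzero i hA hB hC]; positivity
  have hclosed : IsClosed K := by
    have hKeq : K = (⋂ i : Fin n, {x : Fin n → ℝ | i ≠ i0 → i ≠ i1 → i ≠ i2 → x i = 0}) ∩
        ({x : Fin n → ℝ | 0 ≤ x i0} ∩ ({x : Fin n → ℝ | 0 ≤ x i1} ∩
        ({x : Fin n → ℝ | 0 ≤ x i2} ∩ ({x : Fin n → ℝ | x i2 ≤ 1} ∩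
        ({x : Fin n → ℝ | x i0 ≤ m * x i2} ∩ {x : Fin n → ℝ | x i1 ≤ m * (1 - x i2)}))))) := by
      ext x
      simp only [hKdef, Set.mem_setOf_eq, Set.mem_inter_iff, Set.mem_iInter]
    rw [hKeq]
    refine IsClosed.inter ?_ (IsClosed.inter ?_ (IsClosed.inter ?_ (IsClosed.inter ?_
      (IsClosed.inter ?_ (IsClosed.inter ?_ ?_)))))
    · refine isClosed_iInter (fun i => ?_)
      by_cases hA : i = i0
      · simp [hA]
      · by_cases hB : i = i1
        · simp [hB]
        · by_cases hC : i = i2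
          · simp [hC]
          · have heq : {x : Fin n → ℝ | i ≠ i0 → i ≠ i1 → i ≠ i2 → x i = 0}
                = {x : Fin n → ℝ | x i = 0} := by
              ext x; simp [hA, hB, hC]
            rw [heq]
            exact isClosed_eq (continuous_apply i) continuous_const
    · exact isClosed_le continuous_const (continuous_apply i0)
    · exact isClosed_le continuous_const (continuous_apply i1)
    · exact isClosed_le continuous_const (continuous_apply i2)
    · exact isClosed_le (continuous_apply i2) continuous_const
    · exact isClosed_le (continuous_apply i0) (continuous_const.mul (continuous_apply i2))
    · exact isClosed_le (continuous_apply i1)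
        (continuous_const.mul (continuous_const.sub (continuous_apply i2)))
  have hcomp : IsCompact K := IsCompact.of_isClosed_subset isCompact_Icc hclosed hsubIcc
  -- conclusion
  refine ⟨K, hconv, hcomp, ⟨p2 0, hp2K 0 (by omega)⟩, ?_⟩
  have hubR : (latCount K : ℝ) ≤ 2 * ((m:ℝ) + 1) := by
    have h' : (latCount K : ℝ) ≤ ((2 * m + 2 : ℕ) : ℝ) := by exact_mod_cast hub
    push_cast at h' ⊢; linarith
  have hsecR : ∀ i : Fin n, ((m:ℝ) + 1) ≤ (latCount (K ∩ {x : Fin n → ℝ | x i = 0}) : ℝ) := by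
    intro i
    exact_mod_cast hsec i
  have hprod : ((m:ℝ) + 1) ^ n ≤ ∏ i : Fin n, (latCount (K ∩ {x : Fin n → ℝ | x i = 0}) : ℝ) := by
    calc ((m:ℝ) + 1) ^ n = ∏ _i : Fin n, ((m:ℝ) + 1) := by
          rw [Finset.prod_const, Finset.card_univ, Fintype.card_fin]
      _ ≤ ∏ i : Fin n, (latCount (K ∩ {x : Fin n → ℝ | x i = 0}) : ℝ) :=
          Finset.prod_le_prod (fun i _ => by positivity) (fun i _ => hsecR i)
  have hkey : (2:ℝ) ^ (n-1) < c ^ n * ((m:ℝ) + 1) := by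
    rw [div_lt_iff₀ hcn] at hm
    nlinarith
  calc (latCount K : ℝ) ^ (n - 1) ≤ (2 * ((m:ℝ) + 1)) ^ (n - 1) := by
        exact pow_le_pow_left₀ (Nat.cast_nonneg _) hubR _
    _ = 2 ^ (n-1) * ((m:ℝ) + 1) ^ (n-1) := mul_pow _ _ _
    _ < (c ^ n * ((m:ℝ) + 1)) * ((m:ℝ) + 1) ^ (n-1) := by
        have hP : (0:ℝ) < ((m:ℝ) + 1) ^ (n-1) := by positivity
        exact mul_lt_mul_of_pos_right hkey hP
    _ = c ^ n * ((m:ℝ) + 1) ^ n := by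
        rw [mul_assoc]
        congr 1
        rw [mul_comm ((m:ℝ)+1) _, ← pow_succ]
        congr 1
        omega
    _ ≤ c ^ n * ∏ i : Fin n, (latCount (K ∩ {x : Fin n → ℝ | x i = 0}) : ℝ) := by
        exact mul_le_mul_of_nonneg_left hprod (le_of_lt hcn)
end

section
/- Let n ≥ 1, let K ⊆ ℝ^n be an origin-symmetric convex body and let m ∈ ℕ, m ≥ 1. Then #(m K) ≤ 2^{n-1} · m^n · (#(K) + 1); in particular #(m K) ≤ (2m)^n · #(K). -/
open scoped BigOperators Pointwise

noncomputable def icast {n : ℕ} (z : Fin n → ℤ) : Fin n → ℝ := fun i => (z i : ℝ)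

lemma icast_injective {n : ℕ} : Function.Injective (icast (n := n)) := by
  intro a b h
  funext i
  have := congrFun h i
  simp only [icast] at this
  exact_mod_cast this

lemma latCount_eq {n : ℕ} (A : Set (Fin n → ℝ)) :
    latCount A = {z : Fin n → ℤ | icast z ∈ A}.ncard := by
  have h : A ∩ {x : Fin n → ℝ | ∀ i, ∃ z : ℤ, x i = (z : ℝ)}
      = icast '' {z : Fin n → ℤ | icast z ∈ A} := by
    ext x
    constructor
    · rintro ⟨hA, hL⟩
      choose z hz using hL
      have hxz : icast z = x := by funext i; exact (hz i).symm
      exact ⟨z, by simpa [Set.mem_setOf_eq, hxz] using hA, hxz⟩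
    · rintro ⟨z, hz, rfl⟩
      exact ⟨hz, fun i => ⟨z i, rfl⟩⟩
  rw [latCount, h, Set.ncard_image_of_injective _ icast_injective]

lemma finite_ipoints {n : ℕ} {B : Set (Fin n → ℝ)} (hB : IsCompact B) :
    {z : Fin n → ℤ | icast z ∈ B}.Finite := by
  obtain ⟨R, hR⟩ := hB.isBounded.subset_closedBall 0
  apply Set.Finite.subset (Set.Finite.pi (fun _ : Fin n => Set.finite_Icc (-⌈R⌉) ⌈R⌉))
  intro z hz
  simp only [Set.mem_setOf_eq] at hz
  have h1 : icast z ∈ Metric.closedBall 0 R := hR hz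
  rw [Metric.mem_closedBall, dist_zero_right] at h1
  intro i _
  have h2 : ‖icast z i‖ ≤ R := le_trans (norm_le_pi_norm _ i) h1
  simp only [icast, Real.norm_eq_abs, abs_le] at h2
  constructor
  · have : (-⌈R⌉ : ℝ) ≤ (z i : ℝ) := le_trans (by push_cast [neg_le_neg_iff]; linarith [Int.le_ceil R]) h2.1
    exact_mod_cast this
  · have : (z i : ℝ) ≤ (⌈R⌉ : ℝ) := le_trans h2.2 (Int.le_ceil R)
    exact_mod_cast this

lemma class_bound {n m : ℕ} (hm : 1 ≤ m) {K : Set (Fin n → ℝ)} (hconv : Convex ℝ K)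
    (hsym : K = -K) (FT : Finset (Fin n → ℤ)) (hFT : ∀ z, z ∈ FT ↔ icast z ∈ K)
    (A : Finset (Fin n → ℤ)) (hA : ∀ z ∈ A, icast z ∈ (m : ℝ) • K)
    (hAc : ∀ z ∈ A, ∀ w ∈ A, ∀ i, (2 * m : ℤ) ∣ z i - w i) :
    2 * A.card ≤ FT.card + 1 := by
  classical
  letI grp : LinearOrder (Lex (Fin n → ℤ)) := inferInstance
  letI lo : LinearOrder (Lex (Fin n → ℤ)) := grp
  rcases A.eq_empty_or_nonempty with rfl | hAne
  · simp
  obtain ⟨x0, hx0A, hx0min⟩ := A.exists_min_image (fun z => (toLex z : Lex (Fin n → ℤ))) hAne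
  have hm0 : (m : ℝ) ≠ 0 := by positivity
  -- the map g
  set g : (Fin n → ℤ) → (Fin n → ℤ) := fun z i => (z i - x0 i) / (2 * m : ℤ) with hg
  have hgmul : ∀ z ∈ A, ∀ i, (2 * m : ℤ) * g z i = z i - x0 i := by
    intro z hz i
    exact Int.mul_ediv_cancel' (hAc z hz x0 hx0A i)
  -- membership in K
  have hgK : ∀ z ∈ A, icast (g z) ∈ K := by
    intro z hz
    have hp : (m : ℝ)⁻¹ • icast z ∈ K :=
      (Set.mem_smul_set_iff_inv_smul_mem₀ hm0 _ _).1 (hA z hz)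
    have hq : (m : ℝ)⁻¹ • icast x0 ∈ K :=
      (Set.mem_smul_set_iff_inv_smul_mem₀ hm0 _ _).1 (hA x0 hx0A)
    have hq' : -((m : ℝ)⁻¹ • icast x0) ∈ K := by
      rw [hsym]; exact Set.neg_mem_neg.2 hq
    have combo := hconv hp hq' (by norm_num : (0:ℝ) ≤ 1/2) (by norm_num : (0:ℝ) ≤ 1/2)
      (by norm_num)
    have heq : icast (g z)
        = (1/2 : ℝ) • ((m : ℝ)⁻¹ • icast z) + (1/2 : ℝ) • (-((m : ℝ)⁻¹ • icast x0)) := by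
      funext i
      have h1 : ((2 * m : ℤ) : ℝ) * (g z i : ℝ) = (z i : ℝ) - (x0 i : ℝ) := by
        exact_mod_cast congrArg (fun t : ℤ => (t : ℝ)) (hgmul z hz i)
      simp only [icast, Pi.add_apply, Pi.smul_apply, Pi.neg_apply, smul_eq_mul]
      push_cast at h1 ⊢
      have hm0' : (m : ℝ) > 0 := by positivity
      field_simp at h1 ⊢
      linarith
    rw [heq]; exact combo
  -- injectivity of g on A
  have hginj : Set.InjOn g A := by
    intro z hz w hw hzw
    funext i
    have h1 := hgmul z hz i
    have h2 := hgmul w hw i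
    have : (2 * m : ℤ) * g z i = (2 * m : ℤ) * g w i := by rw [hzw]
    omega
  set P : Finset (Fin n → ℤ) := A.image g with hP
  have hPcard : P.card = A.card := Finset.card_image_of_injOn hginj
  -- all elements of P are lex-nonnegative
  have hPpos : ∀ p ∈ P, (0 : Lex (Fin n → ℤ)) ≤ toLex p := by
    intro p hp
    obtain ⟨z, hz, rfl⟩ := Finset.mem_image.1 hp
    by_contra hneg
    push_neg at hneg
    have h2m : (2 * m : ℕ) ≠ 0 := by omega
    have hsm : ((2 * m : ℕ) • toLex (g z) : Lex (Fin n → ℤ)) < 0 := nsmul_neg hneg h2m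
    have hzx : z - x0 = (2 * m : ℕ) • g z := by
      funext i
      have := hgmul z hz i
      simp only [Pi.sub_apply, Pi.smul_apply, nsmul_eq_mul]
      push_cast
      omega
    have : toLex z - toLex x0 < 0 := by
      have : toLex (z - x0) < 0 := by rw [hzx]; exact hsm
      exact this
    have hlt : toLex z < toLex x0 := by
      have := sub_neg.1 this
      exact this
    exact absurd (hx0min z hz) (not_le.2 hlt)
  -- P and -P inside FT
  have hPT : P ⊆ FT := by
    intro p hp
    obtain ⟨z, hz, rfl⟩ := Finset.mem_image.1 hp
    exact (hFT _).2 (hgK z hz)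
  have hnPT : -P ⊆ FT := by
    intro p hp
    obtain ⟨q, hq, rfl⟩ := Finset.mem_neg.1 hp
    obtain ⟨z, hz, rfl⟩ := Finset.mem_image.1 hq
    apply (hFT _).2
    have : icast (-(g z)) = -(icast (g z)) := by
      funext i; simp [icast]
    rw [this, hsym]
    exact Set.neg_mem_neg.2 (hgK z hz)
  -- intersection is at most {0}
  have hint : P ∩ (-P) ⊆ {0} := by
    intro p hp
    rw [Finset.mem_inter] at hp
    obtain ⟨q, hq, hq'⟩ := Finset.mem_neg.1 hp.2
    have h1 : (0 : Lex (Fin n → ℤ)) ≤ toLex p := hPpos p hp.1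
    have h2 : (0 : Lex (Fin n → ℤ)) ≤ toLex q := hPpos q hq
    have h3 : toLex p = -toLex q := by rw [← hq']; rfl
    have : toLex p = 0 := le_antisymm (by rw [h3]; exact neg_nonpos.2 h2) h1
    have hp0 : p = 0 := by
      have := congrArg (fun t : Lex (Fin n → ℤ) => ofLex t) this
      exact this
    simp [hp0]
  have hcard : P.card + (-P).card = (P ∪ -P).card + (P ∩ -P).card :=
    (Finset.card_union_add_card_inter P (-P)).symm
  have hunion : (P ∪ -P).card ≤ FT.card :=
    Finset.card_le_card (Finset.union_subset hPT hnPT)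
  have hintc : (P ∩ -P).card ≤ 1 := le_trans (Finset.card_le_card hint) (by simp)
  have hnc : (-P).card = P.card := Finset.card_neg P
  calc 2 * A.card = P.card + (-P).card := by rw [hnc, hPcard]; ring
    _ = (P ∪ -P).card + (P ∩ -P).card := hcard
    _ ≤ FT.card + 1 := add_le_add hunion hintc

/-- Dilation bound for the lattice point enumerator of an origin-symmetric convex
body `K ⊆ ℝ^n` and `m ≥ 1`:
`#(mK) ≤ 2^{n-1} m^n (#(K)+1) ≤ (2m)^n #(K)`. -/
theorem latCount_dilate (n : ℕ) (hn : 1 ≤ n) (K : Set (Fin n → ℝ))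
    (hconv : Convex ℝ K) (hcomp : IsCompact K) (hne : K.Nonempty) (hsym : K = -K)
    (m : ℕ) (hm : 1 ≤ m) :
    latCount ((m : ℝ) • K) ≤ 2 ^ (n - 1) * m ^ n * (latCount K + 1) ∧
    latCount ((m : ℝ) • K) ≤ (2 * m) ^ n * latCount K := by
  classical
  haveI : NeZero (2 * m) := ⟨by omega⟩
  have hTfin : {z : Fin n → ℤ | icast z ∈ K}.Finite := finite_ipoints hcomp
  have hScomp : IsCompact ((m : ℝ) • K) := hcomp.smul (m : ℝ)
  have hSfin : {z : Fin n → ℤ | icast z ∈ (m : ℝ) • K}.Finite := finite_ipoints hScomp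
  set FT := hTfin.toFinset with hFTdef
  set FS := hSfin.toFinset with hFSdef
  have hLK : latCount K = FT.card := by
    rw [latCount_eq, Set.ncard_eq_toFinset_card _ hTfin]
  have hLS : latCount ((m : ℝ) • K) = FS.card := by
    rw [latCount_eq, Set.ncard_eq_toFinset_card _ hSfin]
  -- 0 ∈ K, so latCount K ≥ 1
  have h0K : (0 : Fin n → ℝ) ∈ K := by
    obtain ⟨p, hp⟩ := hne
    have hp' : -p ∈ K := by rw [hsym]; exact Set.neg_mem_neg.2 hp
    have combo := hconv hp hp' (by norm_num : (0:ℝ) ≤ 1/2) (by norm_num : (0:ℝ) ≤ 1/2)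
      (by norm_num)
    have : (1/2 : ℝ) • p + (1/2 : ℝ) • (-p) = 0 := by
      rw [smul_neg, add_neg_cancel]
    rwa [this] at combo
  have hT1 : 1 ≤ FT.card := by
    rw [Finset.one_le_card]
    refine ⟨0, ?_⟩
    rw [hFTdef, Set.Finite.mem_toFinset]
    show icast (0 : Fin n → ℤ) ∈ K
    have : icast (0 : Fin n → ℤ) = 0 := by funext i; simp [icast]
    rw [this]; exact h0K
  -- fiberwise counting modulo 2m
  set f : (Fin n → ℤ) → (Fin n → ZMod (2 * m)) := fun z i => (z i : ZMod (2 * m)) with hf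
  have hsum : FS.card = ∑ c : Fin n → ZMod (2 * m), (FS.filter fun z => f z = c).card :=
    Finset.card_eq_sum_card_fiberwise (fun x _ => Finset.mem_univ _)
  have hfiber : ∀ c : Fin n → ZMod (2 * m),
      2 * (FS.filter fun z => f z = c).card ≤ FT.card + 1 := by
    intro c
    apply class_bound hm hconv hsym
    · intro z
      rw [hFTdef, Set.Finite.mem_toFinset]
      exact Iff.rfl
    · intro z hz
      rw [Finset.mem_filter, hFSdef, Set.Finite.mem_toFinset] at hz
      exact hz.1
    · intro z hz w hw i
      rw [Finset.mem_filter] at hz hw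
      have hzc : (z i : ZMod (2 * m)) = c i := congrFun hz.2 i
      have hwc : (w i : ZMod (2 * m)) = c i := congrFun hw.2 i
      have : ((z i - w i : ℤ) : ZMod (2 * m)) = 0 := by
        push_cast
        rw [hzc, hwc]
        ring
      have hd := (ZMod.intCast_zmod_eq_zero_iff_dvd _ (2 * m)).1 this
      have : ((2 * m : ℕ) : ℤ) = (2 * m : ℤ) := by push_cast; ring
      rwa [this] at hd
  have hcardz : Fintype.card (Fin n → ZMod (2 * m)) = (2 * m) ^ n := by
    rw [Fintype.card_fun, ZMod.card, Fintype.card_fin]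
  have key : 2 * FS.card ≤ (2 * m) ^ n * (FT.card + 1) := by
    calc 2 * FS.card = ∑ c : Fin n → ZMod (2 * m), 2 * (FS.filter fun z => f z = c).card := by
          rw [hsum, Finset.mul_sum]
      _ ≤ ∑ _c : Fin n → ZMod (2 * m), (FT.card + 1) :=
          Finset.sum_le_sum (fun c _ => hfiber c)
      _ = (2 * m) ^ n * (FT.card + 1) := by
          rw [Finset.sum_const, Finset.card_univ, hcardz, smul_eq_mul]
  have hpow : (2 * m) ^ n = 2 * (2 ^ (n - 1) * m ^ n) := by
    have h2 : 2 ^ n = 2 * 2 ^ (n - 1) := by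
      conv_lhs => rw [← Nat.sub_add_cancel hn]
      rw [pow_succ]; ring
    rw [mul_pow, h2]; ring
  have first : latCount ((m : ℝ) • K) ≤ 2 ^ (n - 1) * m ^ n * (latCount K + 1) := by
    rw [hLS, hLK]
    have h2 : 2 * FS.card ≤ 2 * (2 ^ (n - 1) * m ^ n * (FT.card + 1)) := by
      rw [hpow] at key
      calc 2 * FS.card ≤ 2 * (2 ^ (n - 1) * m ^ n) * (FT.card + 1) := key
        _ = 2 * (2 ^ (n - 1) * m ^ n * (FT.card + 1)) := by ring
    exact Nat.le_of_mul_le_mul_left h2 (by norm_num)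
  refine ⟨first, ?_⟩
  calc latCount ((m : ℝ) • K) ≤ 2 ^ (n - 1) * m ^ n * (latCount K + 1) := first
    _ ≤ 2 ^ (n - 1) * m ^ n * (2 * latCount K) := by
        apply Nat.mul_le_mul_left
        rw [hLK]; omega
    _ = (2 * m) ^ n * latCount K := by rw [hpow]; ring
end

section
/- Let n ≥ 1, let K ⊆ ℝ^n be an origin-symmetric convex body and let v ∈ (K ∩ ℤ^n) \ {0}. Then |(K | v^⊥) ∩ (ℤ^n | v^⊥)| ≤ 6 · 4^{n-1} · |(K ∩ ℤ^n) | v^⊥|, where for a set A ⊆ ℝ^n, A | v^⊥ denotes the image of A under the orthogonal projection onto v^⊥. In particular, there is a universal constant c > 0 with |(K | v^⊥) ∩ (ℤ^n | v^⊥)| ≤ c^n · |(K ∩ ℤ^n) | v^⊥| for all such n, K, v. -/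
open scoped BigOperators

/-- The set of integer lattice points of `ℝ^n`. -/
def intLat (n : ℕ) : Set (Fin n → ℝ) := {x | ∀ i, ∃ z : ℤ, x i = (z : ℝ)}

/-- The orthogonal projection of `ℝ^n` onto the hyperplane `v^⊥`. -/
noncomputable def projPerp {n : ℕ} (v : Fin n → ℝ) : (Fin n → ℝ) → (Fin n → ℝ) :=
  fun x => x - ((∑ j, x j * v j) / ∑ j, v j * v j) • v

namespace ProjAux

variable {n : ℕ}

lemma sumvv_pos (v : Fin n → ℝ) (hv0 : v ≠ 0) : 0 < ∑ j, v j * v j := by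
  have h : ∃ i, v i ≠ 0 := by
    by_contra h; push_neg at h; exact hv0 (funext h)
  obtain ⟨i, hi⟩ := h
  exact Finset.sum_pos' (fun j _ => mul_self_nonneg _)
    ⟨i, Finset.mem_univ i, mul_self_pos.mpr hi⟩

lemma projPerp_sub (v a b : Fin n → ℝ) :
    projPerp v (a - b) = projPerp v a - projPerp v b := by
  have hs : ∑ j, (a - b) j * v j = (∑ j, a j * v j) - ∑ j, b j * v j := by
    rw [← Finset.sum_sub_distrib]
    exact Finset.sum_congr rfl fun j _ => by simp [sub_mul]
  unfold projPerp
  rw [hs]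
  ext i
  simp only [Pi.sub_apply, Pi.smul_apply, smul_eq_mul]
  ring

lemma projPerp_smul (v : Fin n → ℝ) (c : ℝ) (a : Fin n → ℝ) :
    projPerp v (c • a) = c • projPerp v a := by
  have hs : ∑ j, (c • a) j * v j = c * ∑ j, a j * v j := by
    rw [Finset.mul_sum]
    exact Finset.sum_congr rfl fun j _ => by simp [mul_assoc]
  unfold projPerp
  rw [hs]
  ext i
  simp only [Pi.sub_apply, Pi.smul_apply, smul_eq_mul]
  ring

lemma projPerp_add_smul (v : Fin n → ℝ) (hv0 : v ≠ 0) (x : Fin n → ℝ) (t : ℝ) :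
    projPerp v (x + t • v) = projPerp v x := by
  have hD : (∑ j, v j * v j) ≠ 0 := (sumvv_pos v hv0).ne'
  have hs : ∑ j, (x + t • v) j * v j = (∑ j, x j * v j) + t * ∑ j, v j * v j := by
    rw [Finset.mul_sum, ← Finset.sum_add_distrib]
    exact Finset.sum_congr rfl fun j _ => by simp [add_mul, mul_assoc]
  unfold projPerp
  rw [hs]
  ext i
  simp only [Pi.add_apply, Pi.sub_apply, Pi.smul_apply, smul_eq_mul]
  field_simp
  have hD2 : (∑ j, v j ^ 2) ≠ 0 := by simpa [sq] using hD
  linear_combination (-(t * v i)) * mul_inv_cancel₀ hD2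

lemma projPerp_eq_imp (v a b : Fin n → ℝ) (h : projPerp v a = projPerp v b) :
    ∃ t : ℝ, a = b + t • v := by
  unfold projPerp at h
  refine ⟨(∑ j, a j * v j) / (∑ j, v j * v j) - (∑ j, b j * v j) / (∑ j, v j * v j), ?_⟩
  funext i
  have hi := congrFun h i
  simp only [Pi.sub_apply, Pi.smul_apply, smul_eq_mul] at hi
  simp only [Pi.add_apply, Pi.smul_apply, smul_eq_mul]
  linear_combination hi

/-- lattice points in a compact set form a finite set -/
lemma finite_compact_inter_intLat (K : Set (Fin n → ℝ)) (hcomp : IsCompact K) :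
    (K ∩ intLat n).Finite := by
  obtain ⟨r, hr⟩ := hcomp.isBounded.subset_closedBall 0
  have hZ : ({z : Fin n → ℤ | ∀ i, z i ∈ Set.Icc (-⌈r⌉) ⌈r⌉} : Set (Fin n → ℤ)).Finite := by
    apply Set.Finite.subset (Set.Finite.pi (fun i : Fin n => Set.finite_Icc (-⌈r⌉) ⌈r⌉))
    intro z hz
    exact Set.mem_univ_pi.mpr hz
  have himg : (K ∩ intLat n) ⊆ (fun z : Fin n → ℤ => fun i => (z i : ℝ)) ''
      {z : Fin n → ℤ | ∀ i, z i ∈ Set.Icc (-⌈r⌉) ⌈r⌉} := by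
    rintro x ⟨hxK, hxL⟩
    refine ⟨fun i => ⌊x i⌋, ?_, ?_⟩
    · intro i
      obtain ⟨z, hz⟩ := hxL i
      have hxr : |x i| ≤ r := by
        have h1 : x ∈ Metric.closedBall 0 r := hr hxK
        have h2 : ‖x‖ ≤ r := by simpa using h1
        exact le_trans (by simpa using norm_le_pi_norm x i) h2
      have hzr : |(z:ℝ)| ≤ r := by rwa [hz] at hxr
      have hfl : ⌊x i⌋ = z := by rw [hz, Int.floor_intCast]
      show ⌊x i⌋ ∈ Set.Icc (-⌈r⌉) ⌈r⌉
      rw [hfl]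
      constructor
      · have : (-(⌈r⌉:ℝ)) ≤ (z:ℝ) := by
          have := neg_abs_le (z:ℝ)
          have h3 : (z:ℝ) ≥ -r := by
            rcases abs_le.mp hzr with ⟨h, _⟩; linarith
          have h4 : r ≤ (⌈r⌉:ℝ) := Int.le_ceil r
          linarith
        exact_mod_cast this
      · have : (z:ℝ) ≤ (⌈r⌉:ℝ) := by
          rcases abs_le.mp hzr with ⟨_, h⟩
          have h4 : r ≤ (⌈r⌉:ℝ) := Int.le_ceil r
          linarith
        exact_mod_cast this
    · funext i
      show ((⌊x i⌋ : ℤ) : ℝ) = x i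
      obtain ⟨z, hz⟩ := hxL i
      rw [hz, Int.floor_intCast]
  exact (hZ.image _).subset himg

lemma main_bound (n : ℕ) (hn : 1 ≤ n) (K : Set (Fin n → ℝ))
    (hconv : Convex ℝ K) (hcomp : IsCompact K) (hsym : K = -K)
    (v : Fin n → ℝ) (hv : v ∈ K ∩ intLat n) (hv0 : v ≠ 0) :
    ((projPerp v '' K) ∩ (projPerp v '' intLat n)).ncard ≤
        6 * 4 ^ (n - 1) * (projPerp v '' (K ∩ intLat n)).ncard := by
  classical
  obtain ⟨hvK, hvL⟩ := hv
  have hnegmem : ∀ x ∈ K, -x ∈ K := by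
    intro x hx
    rw [hsym]
    exact Set.neg_mem_neg.mpr hx
  -- segment [-v, v] ⊆ K
  have hseg : ∀ s : ℝ, |s| ≤ 1 → s • v ∈ K := by
    intro s hs
    rcases abs_le.mp hs with ⟨h1, h2⟩
    have := hconv hvK (hnegmem v hvK) (a := (1+s)/2) (b := (1-s)/2)
      (by linarith) (by linarith) (by ring)
    convert this using 1
    ext i
    simp only [Pi.smul_apply, Pi.add_apply, Pi.neg_apply, smul_eq_mul]
    ring
  set T := (projPerp v '' K) ∩ (projPerp v '' intLat n) with hT
  set S := projPerp v '' (K ∩ intLat n) with hS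
  have hSfin : S.Finite := (finite_compact_inter_intLat K hcomp).image _
  -- step 1 : lifts
  have exP : ∀ y ∈ T, ∃ p : (Fin n → ℝ) × (Fin n → ℝ) × ℝ,
      p.1 ∈ intLat n ∧ projPerp v p.1 = y ∧ p.2.1 ∈ K ∧ |p.2.2| ≤ 1 ∧
        p.1 = p.2.1 + p.2.2 • v := by
    rintro y ⟨⟨x, hxK, hx⟩, ⟨z, hzL, hz⟩⟩
    obtain ⟨t, ht⟩ := projPerp_eq_imp v x z (by rw [hx, hz])
    refine ⟨⟨z + (round t : ℝ) • v, x, (round t : ℝ) - t⟩, ?_, ?_, hxK, ?_, ?_⟩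
    · intro i
      obtain ⟨a, ha⟩ := hzL i
      obtain ⟨b, hb⟩ := hvL i
      refine ⟨a + round t * b, ?_⟩
      simp only [Pi.add_apply, Pi.smul_apply, smul_eq_mul]
      rw [ha, hb]
      push_cast
      ring
    · rw [projPerp_add_smul v hv0, hz]
    · have := abs_sub_round t
      rw [abs_sub_comm] at this
      linarith
    · rw [ht]; ext i; simp only [Pi.add_apply, Pi.smul_apply, smul_eq_mul]; ring
  -- choice function
  set P : (Fin n → ℝ) → ((Fin n → ℝ) × (Fin n → ℝ) × ℝ) → Prop := fun y p =>
      p.1 ∈ intLat n ∧ projPerp v p.1 = y ∧ p.2.1 ∈ K ∧ |p.2.2| ≤ 1 ∧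
        p.1 = p.2.1 + p.2.2 • v with hPdef
  set W : (Fin n → ℝ) → ((Fin n → ℝ) × (Fin n → ℝ) × ℝ) := fun y =>
    if h : ∃ p, P y p then h.choose else ⟨0, 0, 0⟩ with hWdef
  have hW : ∀ y ∈ T, P y (W y) := by
    intro y hy
    have h : ∃ p, P y p := exP y hy
    simp only [hWdef, dif_pos h]
    exact h.choose_spec
  -- class function
  set cl : (Fin n → ℝ) → (Fin n → ZMod 4) := fun w => fun i => ((⌊w i⌋ : ℤ) : ZMod 4)
    with hcl
  set base : (Fin n → ZMod 4) → (Fin n → ℝ) := fun c =>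
    if h : ∃ y, y ∈ T ∧ cl (W y).1 = c then h.choose else 0 with hbasedef
  have hbase : ∀ y ∈ T, base (cl (W y).1) ∈ T ∧
      cl (W (base (cl (W y).1))).1 = cl (W y).1 := by
    intro y hy
    have h : ∃ y', y' ∈ T ∧ cl (W y').1 = cl (W y).1 := ⟨y, hy, rfl⟩
    simp only [hbasedef, dif_pos h]
    exact h.choose_spec
  -- key: for y1 y2 in T with equal class, (1/4)•(y1 - y2) ∈ S
  have key : ∀ y1 ∈ T, ∀ y2 ∈ T, cl (W y1).1 = cl (W y2).1 →
      (4:ℝ)⁻¹ • (y1 - y2) ∈ S := by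
    intro y1 hy1 y2 hy2 hc
    obtain ⟨hL1, hπ1, hK1, hs1, he1⟩ := hW y1 hy1
    obtain ⟨hL2, hπ2, hK2, hs2, he2⟩ := hW y2 hy2
    set w1 := (W y1).1; set x1 := (W y1).2.1; set s1 := (W y1).2.2
    set w2 := (W y2).1; set x2 := (W y2).2.1; set s2 := (W y2).2.2
    set u := (4:ℝ)⁻¹ • (w1 - w2) with hu
    have huK : u ∈ K := by
      have hp : (1/2 : ℝ) • x1 + (1/2 : ℝ) • (-x2) ∈ K :=
        hconv hK1 (hnegmem x2 hK2) (by norm_num) (by norm_num) (by norm_num)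
      have hsv : ((s1 - s2)/2) • v ∈ K := by
        apply hseg
        rw [abs_div]
        rw [abs_of_pos (by norm_num : (0:ℝ) < 2)]
        rw [div_le_one (by norm_num)]
        calc |s1 - s2| ≤ |s1| + |s2| := abs_sub _ _
          _ ≤ 2 := by linarith
      have hq : (1/2 : ℝ) • ((1/2 : ℝ) • x1 + (1/2 : ℝ) • (-x2))
          + (1/2 : ℝ) • (((s1 - s2)/2) • v) ∈ K :=
        hconv hp hsv (by norm_num) (by norm_num) (by norm_num)
      convert hq using 1
      rw [hu, he1, he2]
      ext i
      simp only [Pi.smul_apply, Pi.sub_apply, Pi.add_apply, Pi.neg_apply, smul_eq_mul]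
      ring
    have huL : u ∈ intLat n := by
      intro i
      obtain ⟨a, ha⟩ := hL1 i
      obtain ⟨b, hb⟩ := hL2 i
      have hca : cl w1 i = cl w2 i := by rw [hc]
      have : ((a : ZMod 4)) = ((b : ZMod 4)) := by
        simpa [hcl, ha, hb, Int.floor_intCast] using hca
      have hdvd : ((4:ℕ) : ℤ) ∣ b - a := (ZMod.intCast_eq_intCast_iff_dvd_sub a b 4).mp this
      obtain ⟨k, hk⟩ := hdvd
      refine ⟨-k, ?_⟩
      have : w1 i - w2 i = ((a - b : ℤ) : ℝ) := by rw [ha, hb]; push_cast; ring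
      have hab : (a - b : ℤ) = 4 * (-k) := by omega
      simp only [hu, Pi.smul_apply, Pi.sub_apply, smul_eq_mul]
      rw [show w1 i - w2 i = ((a - b : ℤ) : ℝ) from this, hab]
      push_cast
      ring
    have : projPerp v u = (4:ℝ)⁻¹ • (y1 - y2) := by
      rw [hu, projPerp_smul, projPerp_sub, hπ1, hπ2]
    rw [← this]
    exact ⟨u, ⟨huK, huL⟩, rfl⟩
  -- the injection
  set F : (Fin n → ℝ) → (Fin n → ZMod 4) × (Fin n → ℝ) := fun y =>
    (cl (W y).1, (4:ℝ)⁻¹ • (y - base (cl (W y).1))) with hF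
  have hmaps : ∀ y ∈ T, F y ∈ ((Finset.univ : Finset (Fin n → ZMod 4)) ×ˢ
      hSfin.toFinset : Finset _) := by
    intro y hy
    obtain ⟨hb1, hb2⟩ := hbase y hy
    simp only [Finset.mem_product, Finset.mem_univ, true_and, Set.Finite.mem_toFinset, hF]
    exact key y hy _ hb1 hb2.symm
  have hinj : Set.InjOn F T := by
    intro y1 h1 y2 h2 he
    have hc : cl (W y1).1 = cl (W y2).1 := congrArg Prod.fst he
    have h2' : (4:ℝ)⁻¹ • (y1 - base (cl (W y1).1)) =
        (4:ℝ)⁻¹ • (y2 - base (cl (W y2).1)) := congrArg Prod.snd he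
    rw [hc] at h2'
    have := smul_right_injective (Fin n → ℝ) (by norm_num : (4:ℝ)⁻¹ ≠ 0) h2'
    have := sub_left_injective this
    exact this
  have hle : T.ncard ≤ (((Finset.univ : Finset (Fin n → ZMod 4)) ×ˢ
      hSfin.toFinset : Finset _) : Set ((Fin n → ZMod 4) × (Fin n → ℝ))).ncard := by
    apply Set.ncard_le_ncard_of_injOn F (by exact_mod_cast hmaps) hinj
  rw [Set.ncard_coe_finset, Finset.card_product, Finset.card_univ] at hle
  have hcard : Fintype.card (Fin n → ZMod 4) = 4 ^ n := by
    simp [ZMod.card]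
  rw [hcard] at hle
  have hS' : hSfin.toFinset.card = S.ncard := (Set.ncard_eq_toFinset_card _ hSfin).symm
  rw [hS'] at hle
  have hpow : (4:ℕ) ^ n = 4 * 4 ^ (n-1) := by
    conv_lhs => rw [show n = 1 + (n-1) by omega]
    rw [pow_add, pow_one]
  calc T.ncard ≤ 4 ^ n * S.ncard := hle
    _ = 4 * 4 ^ (n-1) * S.ncard := by rw [hpow]
    _ ≤ 6 * 4 ^ (n - 1) * S.ncard := Nat.mul_le_mul_right _ (Nat.mul_le_mul_right _ (by norm_num))

end ProjAux

/-- Projection-counting lemma: if `K ⊆ ℝ^n` is an origin-symmetric convex body and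
`v ∈ (K ∩ ℤ^n) \ {0}`, then
`|(K|v^⊥) ∩ (ℤ^n|v^⊥)| ≤ 6·4^{n-1} |(K ∩ ℤ^n)|v^⊥|`; in particular there is a
universal constant `c > 0` with `|(K|v^⊥) ∩ (ℤ^n|v^⊥)| ≤ c^n |(K ∩ ℤ^n)|v^⊥|`
for all such `n`, `K` and `v`. -/
theorem projection_count (n : ℕ) (hn : 1 ≤ n) (K : Set (Fin n → ℝ))
    (hconv : Convex ℝ K) (hcomp : IsCompact K) (hne : K.Nonempty) (hsym : K = -K)
    (v : Fin n → ℝ) (hv : v ∈ K ∩ intLat n) (hv0 : v ≠ 0) :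
    ((projPerp v '' K) ∩ (projPerp v '' intLat n)).ncard ≤
        6 * 4 ^ (n - 1) * (projPerp v '' (K ∩ intLat n)).ncard ∧
      ∃ c : ℝ, 0 < c ∧ ∀ m : ℕ, 1 ≤ m → ∀ K' : Set (Fin m → ℝ),
        Convex ℝ K' → IsCompact K' → K'.Nonempty → K' = -K' →
        ∀ v' : Fin m → ℝ, v' ∈ K' ∩ intLat m → v' ≠ 0 →
          (((projPerp v' '' K') ∩ (projPerp v' '' intLat m)).ncard : ℝ) ≤
            c ^ m * ((projPerp v' '' (K' ∩ intLat m)).ncard : ℝ) := by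
  refine ⟨ProjAux.main_bound n hn K hconv hcomp hsym v hv hv0, 24, by norm_num, ?_⟩
  intro m hm K' hconv' hcomp' _ hsym' v' hv' hv0'
  have h1 := ProjAux.main_bound m hm K' hconv' hcomp' hsym' v' hv' hv0'
  have h2 : (6 * 4 ^ (m - 1) : ℕ) ≤ 24 ^ m := by
    calc (6 * 4 ^ (m-1) : ℕ) ≤ 24 * 24 ^ (m-1) := by
          apply Nat.mul_le_mul (by norm_num) (Nat.pow_le_pow_left (by norm_num) _)
      _ = 24 ^ m := by
          rw [← pow_succ']
          congr 1
          omega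
  calc (((projPerp v' '' K') ∩ (projPerp v' '' intLat m)).ncard : ℝ)
      ≤ ((6 * 4 ^ (m - 1) * (projPerp v' '' (K' ∩ intLat m)).ncard : ℕ) : ℝ) := by
        exact_mod_cast h1
    _ ≤ (24:ℝ) ^ m * ((projPerp v' '' (K' ∩ intLat m)).ncard : ℝ) := by
        push_cast
        apply mul_le_mul_of_nonneg_right _ (by positivity)
        exact_mod_cast h2
end

section
/- Let n ≥ 2, let u = (1, 2, 4, …, 2^{n-1})ᵀ ∈ ℝ^n, let C_n = [-1, 1]^n and let K = conv((C_n ∩ u^⊥) ∪ {e_n, -e_n}). Then e_n ∈ K, the projection of K onto e_n^⊥ satisfies |(K | e_n^⊥) ∩ (ℤ^n | e_n^⊥)| = 3^{n-1}, and (K ∩ ℤ^n) | e_n^⊥ = {0}. -/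
open scoped BigOperators

/-- The vector `u = (1, 2, 4, …, 2^{n-1})`. -/
def uvec (n : ℕ) : Fin n → ℝ := fun i => 2 ^ (i : ℕ)

/-- The cube `C_n = [-1, 1]^n`. -/
def cubeC (n : ℕ) : Set (Fin n → ℝ) := {x | ∀ i, |x i| ≤ 1}

/-- The `n`-th standard unit vector `eₙ` (last coordinate). -/
def lastUnit (n : ℕ) : Fin n → ℝ := fun i => if (i : ℕ) = n - 1 then 1 else 0

/-- The body `K = conv((C_n ∩ u^⊥) ∪ {±eₙ})`. -/
noncomputable def Kex (n : ℕ) : Set (Fin n → ℝ) :=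
  convexHull ℝ ((cubeC n ∩ {x | ∑ i, x i * uvec n i = 0}) ∪ {lastUnit n, -lastUnit n})

section Aux

variable {n : ℕ}

lemma sum_mul_lastUnit (hn : 1 ≤ n) (f : Fin n → ℝ) :
    ∑ j, f j * lastUnit n j = f ⟨n - 1, by omega⟩ := by
  have key : ∀ j : Fin n, f j * lastUnit n j
      = if j = (⟨n - 1, by omega⟩ : Fin n) then f j else 0 := by
    intro j
    simp only [lastUnit]
    by_cases h : (j : ℕ) = n - 1
    · have hj : j = (⟨n - 1, by omega⟩ : Fin n) := Fin.ext h
      simp [h, hj]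
    · have hj : ¬ (j = (⟨n - 1, by omega⟩ : Fin n)) := fun hh => h (by rw [hh])
      simp [h, hj]
  rw [Finset.sum_congr rfl fun j _ => key j, Finset.sum_ite_eq' Finset.univ]
  simp

lemma projPerp_lastUnit_apply (hn : 1 ≤ n) (x : Fin n → ℝ) (i : Fin n) :
    projPerp (lastUnit n) x i = if (i : ℕ) = n - 1 then 0 else x i := by
  have h1 : ∑ j, lastUnit n j * lastUnit n j = 1 := by
    rw [sum_mul_lastUnit hn]; simp [lastUnit]
  have h2 : ∑ j, x j * lastUnit n j = x ⟨n - 1, by omega⟩ := sum_mul_lastUnit hn x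
  have hform : projPerp (lastUnit n) x i
      = x i - ((∑ j, x j * lastUnit n j) / ∑ j, lastUnit n j * lastUnit n j) * lastUnit n i := rfl
  rw [hform, h1, h2, div_one]
  by_cases h : (i : ℕ) = n - 1
  · have hi : i = (⟨n - 1, by omega⟩ : Fin n) := Fin.ext h
    have hl : lastUnit n i = 1 := by simp [lastUnit, h]
    rw [if_pos h, hl, hi]; ring
  · have hl : lastUnit n i = 0 := by simp [lastUnit, h]
    rw [if_neg h, hl]; ring

lemma sum_lastUnit_mul_uvec (hn : 1 ≤ n) :
    ∑ j, lastUnit n j * uvec n j = 2 ^ (n - 1) := by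
  have : ∀ j : Fin n, lastUnit n j * uvec n j = uvec n j * lastUnit n j := fun j => mul_comm _ _
  rw [Finset.sum_congr rfl fun j _ => this j, sum_mul_lastUnit hn]
  simp [uvec]

lemma convex_cubeC : Convex ℝ (cubeC n) := by
  have h : cubeC n = Set.pi Set.univ (fun _ : Fin n => Set.Icc (-1 : ℝ) 1) := by
    ext x
    simp only [cubeC, Set.mem_setOf_eq, Set.mem_pi, Set.mem_univ, Set.mem_Icc, forall_true_left,
      abs_le]
  rw [h]
  exact convex_pi fun i _ => convex_Icc _ _

lemma Kex_subset_cube : Kex n ⊆ cubeC n := by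
  refine convexHull_min ?_ convex_cubeC
  rintro x (hx | hx)
  · exact hx.1
  · rcases hx with hx | hx
    · subst hx; intro i; simp only [lastUnit]; split <;> simp
    · simp only [Set.mem_singleton_iff] at hx; subst hx
      intro i; simp only [Pi.neg_apply, lastUnit, abs_neg]; split <;> simp

end Aux
section Aux2
variable {n : ℕ}

lemma Kex_constraint (hn : 1 ≤ n) {x : Fin n → ℝ} (hx : x ∈ Kex n) (i : Fin n)
    (hi : (i : ℕ) ≠ n - 1) :
    |x i| + |∑ j, x j * uvec n j| / 2 ^ (n - 1) ≤ 1 := by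
  have hc : (0 : ℝ) < 2 ^ (n - 1) := by positivity
  set T : Set (Fin n → ℝ) := {y | |y i| + |∑ j, y j * uvec n j| / 2 ^ (n - 1) ≤ 1} with hT
  have hconv : Convex ℝ T := by
    intro p hp q hq a b ha hb hab
    simp only [hT, Set.mem_setOf_eq] at hp hq ⊢
    have hsum : ∑ j, (a • p + b • q) j * uvec n j
        = a * ∑ j, p j * uvec n j + b * ∑ j, q j * uvec n j := by
      rw [Finset.mul_sum, Finset.mul_sum, ← Finset.sum_add_distrib]
      refine Finset.sum_congr rfl fun j _ => ?_
      simp only [Pi.add_apply, Pi.smul_apply, smul_eq_mul]; ring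
    have h1 : |(a • p + b • q) i| ≤ a * |p i| + b * |q i| := by
      have : (a • p + b • q) i = a * p i + b * q i := rfl
      rw [this]
      calc |a * p i + b * q i| ≤ |a * p i| + |b * q i| := abs_add_le _ _
        _ = a * |p i| + b * |q i| := by
            rw [abs_mul, abs_mul, abs_of_nonneg ha, abs_of_nonneg hb]
    have h2 : |∑ j, (a • p + b • q) j * uvec n j|
        ≤ a * |∑ j, p j * uvec n j| + b * |∑ j, q j * uvec n j| := by
      rw [hsum]
      calc |a * ∑ j, p j * uvec n j + b * ∑ j, q j * uvec n j|
          ≤ |a * ∑ j, p j * uvec n j| + |b * ∑ j, q j * uvec n j| := abs_add_le _ _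
        _ = a * |∑ j, p j * uvec n j| + b * |∑ j, q j * uvec n j| := by
            rw [abs_mul, abs_mul, abs_of_nonneg ha, abs_of_nonneg hb]
    have h3 : |∑ j, (a • p + b • q) j * uvec n j| / 2 ^ (n - 1)
        ≤ (a * |∑ j, p j * uvec n j| + b * |∑ j, q j * uvec n j|) / 2 ^ (n - 1) :=
      (div_le_div_iff_of_pos_right hc).mpr h2
    have e1 : (a * |∑ j, p j * uvec n j| + b * |∑ j, q j * uvec n j|) / 2 ^ (n - 1)
        = a * (|∑ j, p j * uvec n j| / 2 ^ (n - 1))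
          + b * (|∑ j, q j * uvec n j| / 2 ^ (n - 1)) := by ring
    have hA : a * (|p i| + |∑ j, p j * uvec n j| / 2 ^ (n - 1)) ≤ a * 1 :=
      mul_le_mul_of_nonneg_left hp ha
    have hB : b * (|q i| + |∑ j, q j * uvec n j| / 2 ^ (n - 1)) ≤ b * 1 :=
      mul_le_mul_of_nonneg_left hq hb
    nlinarith [h1, h3, e1, hA, hB]
  have hgen : (cubeC n ∩ {x | ∑ i, x i * uvec n i = 0}) ∪ {lastUnit n, -lastUnit n} ⊆ T := by
    rintro y (hy | hy)
    · simp only [hT, Set.mem_setOf_eq]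
      rw [hy.2]
      simpa using hy.1 i
    · have hlast : |lastUnit n i| = 0 := by simp [lastUnit, hi]
      rcases hy with hy | hy
      · subst hy
        simp only [hT, Set.mem_setOf_eq]
        rw [sum_lastUnit_mul_uvec hn, hlast, abs_of_pos hc, div_self (ne_of_gt hc)]
        norm_num
      · simp only [Set.mem_singleton_iff] at hy; subst hy
        simp only [hT, Set.mem_setOf_eq]
        have hneg : |(-lastUnit n) i| = 0 := by simp [lastUnit, hi]
        have hs : ∑ j, (-lastUnit n) j * uvec n j = -(2 ^ (n - 1)) := by
          rw [← sum_lastUnit_mul_uvec hn (n := n), ← Finset.sum_neg_distrib]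
          exact Finset.sum_congr rfl fun j _ => by simp [neg_mul]
        rw [hs, hneg, abs_neg, abs_of_pos hc, div_self (ne_of_gt hc)]
        norm_num
  exact convexHull_min hgen hconv hx

lemma geom_sum_two_int (k : ℕ) : ∑ i ∈ Finset.range k, (2 : ℤ) ^ i = 2 ^ k - 1 := by
  induction k with
  | zero => simp
  | succ l ihl => rw [Finset.sum_range_succ, ihl]; ring

lemma digits_zero : ∀ (m : ℕ) (z : Fin m → ℤ), (∀ j, |z j| ≤ 1) →
    (∑ j, z j * 2 ^ (j : ℕ)) = 0 → ∀ j, z j = 0 := by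
  intro m
  induction m with
  | zero => intro z _ _ j; exact j.elim0
  | succ k ih =>
    intro z hb hsum
    rw [Fin.sum_univ_castSucc] at hsum
    have hgeom : ∑ j : Fin k, (2 : ℤ) ^ (j : ℕ) = 2 ^ k - 1 := by
      rw [Fin.sum_univ_eq_sum_range]; exact geom_sum_two_int k
    have hbound : |∑ j : Fin k, z j.castSucc * 2 ^ (j : ℕ)| ≤ 2 ^ k - 1 := by
      calc |∑ j : Fin k, z j.castSucc * 2 ^ (j : ℕ)|
          ≤ ∑ j : Fin k, |z j.castSucc * 2 ^ (j : ℕ)| := Finset.abs_sum_le_sum_abs _ _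
        _ ≤ ∑ j : Fin k, (2 : ℤ) ^ (j : ℕ) := by
            refine Finset.sum_le_sum fun j _ => ?_
            rw [abs_mul, abs_pow, abs_two]
            calc |z j.castSucc| * 2 ^ (j : ℕ) ≤ 1 * 2 ^ (j : ℕ) := by
                  exact mul_le_mul_of_nonneg_right (hb _) (by positivity)
              _ = 2 ^ (j : ℕ) := one_mul _
        _ = 2 ^ k - 1 := hgeom
    have hlastz : z (Fin.last k) = 0 := by
      by_contra hne
      have h1 : 1 ≤ |z (Fin.last k)| := by
        rcases (abs_pos.mpr hne) with h; omega
      have h2 : (2 : ℤ) ^ k ≤ |z (Fin.last k) * 2 ^ ((Fin.last k : Fin (k+1)) : ℕ)| := by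
        rw [abs_mul, abs_pow, abs_two]
        have : ((Fin.last k : Fin (k+1)) : ℕ) = k := rfl
        rw [this]
        nlinarith [pow_pos (by norm_num : (0:ℤ) < 2) k]
      have h3 : z (Fin.last k) * 2 ^ ((Fin.last k : Fin (k+1)) : ℕ)
          = -(∑ j : Fin k, z j.castSucc * 2 ^ ((j.castSucc : Fin (k+1)) : ℕ)) := by
        linarith [hsum]
      have h4 : ∀ j : Fin k, ((j.castSucc : Fin (k+1)) : ℕ) = (j : ℕ) := fun j => rfl
      rw [h3, abs_neg] at h2
      simp only [h4] at h2
      have := le_trans h2 hbound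
      have hp : (0:ℤ) < 2 ^ k := by positivity
      omega
    have hsum' : ∑ j : Fin k, z j.castSucc * 2 ^ (j : ℕ) = 0 := by
      have h4 : ∀ j : Fin k, ((j.castSucc : Fin (k+1)) : ℕ) = (j : ℕ) := fun j => rfl
      simp only [h4, hlastz, zero_mul, add_zero] at hsum
      exact hsum
    intro j
    refine Fin.lastCases hlastz (fun j => ?_) j
    exact ih (fun j => z j.castSucc) (fun j => hb _) hsum' j
end Aux2
section Aux3
variable {n : ℕ}

lemma zero_mem_Kex : (0 : Fin n → ℝ) ∈ Kex n :=
  subset_convexHull ℝ _ (Or.inl ⟨fun i => by simp, by simp⟩)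

lemma proj_image_lattice_eq_zero (hn : 1 ≤ n) :
    projPerp (lastUnit n) '' (Kex n ∩ intLat n) = {0} := by
  apply Set.eq_singleton_iff_unique_mem.mpr
  constructor
  · refine ⟨0, ⟨zero_mem_Kex, fun i => ⟨0, by simp⟩⟩, ?_⟩
    funext i
    rw [projPerp_lastUnit_apply hn]
    split <;> simp
  · rintro y ⟨x, ⟨hxK, hxL⟩, rfl⟩
    choose z hz using hxL
    have hcube := Kex_subset_cube hxK
    have hzb : ∀ i, |z i| ≤ 1 := by
      intro i
      have h := hcube i
      rw [hz i] at h
      have : |((z i : ℤ) : ℝ)| = ((|z i| : ℤ) : ℝ) := by push_cast; ring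
      rw [this] at h
      exact_mod_cast h
    have hzero : ∀ i : Fin n, (i : ℕ) ≠ n - 1 → x i = 0 := by
      intro i hi
      by_cases h0 : x i = 0
      · exact h0
      exfalso
      have hzi : z i ≠ 0 := fun h => h0 (by rw [hz i, h]; simp)
      have h1 : (1 : ℝ) ≤ |x i| := by
        rw [hz i]
        have h2 : (1 : ℤ) ≤ |z i| := by have := abs_pos.mpr hzi; omega
        have : |((z i : ℤ) : ℝ)| = ((|z i| : ℤ) : ℝ) := by push_cast; ring
        rw [this]
        exact_mod_cast h2
      have hcon := Kex_constraint hn hxK i hi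
      have hc : (0 : ℝ) < 2 ^ (n - 1) := by positivity
      have hSnn : 0 ≤ |∑ j, x j * uvec n j| / 2 ^ (n - 1) := by positivity
      have hS2 : |∑ j, x j * uvec n j| / 2 ^ (n - 1) ≤ 0 := by linarith
      have hS : |∑ j, x j * uvec n j| = 0 := by
        have h3 : |∑ j, x j * uvec n j| / 2 ^ (n - 1) = 0 := le_antisymm hS2 hSnn
        have := (div_eq_zero_iff.mp h3)
        rcases this with h | h
        · exact h
        · exact absurd h (ne_of_gt hc)
      have hSum0 : ∑ j, x j * uvec n j = 0 := abs_eq_zero.mp hS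
      have hcast : ((∑ j, z j * 2 ^ (j : ℕ) : ℤ) : ℝ) = ∑ j, x j * uvec n j := by
        push_cast
        exact Finset.sum_congr rfl fun j _ => by rw [hz j]; simp [uvec]
      have hZ : (∑ j, z j * 2 ^ (j : ℕ) : ℤ) = 0 := by
        have := hcast.trans hSum0
        exact_mod_cast this
      exact hzi (digits_zero n z hzb hZ i)
    funext i
    rw [projPerp_lastUnit_apply hn]
    by_cases h : (i : ℕ) = n - 1
    · simp [h]
    · simp [h, hzero i h]

end Aux3
section Aux4
variable {n : ℕ}

lemma geom_sum_two_real (k : ℕ) : ∑ i ∈ Finset.range k, (2 : ℝ) ^ i = 2 ^ k - 1 := by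
  induction k with
  | zero => simp
  | succ l ihl => rw [Finset.sum_range_succ, ihl]; ring

lemma inter_eq_pi (hn : 1 ≤ n) :
    (projPerp (lastUnit n) '' Kex n) ∩ (projPerp (lastUnit n) '' intLat n)
      = Set.pi Set.univ
          (fun i : Fin n => if (i : ℕ) = n - 1 then ({0} : Set ℝ) else {-1, 0, 1}) := by
  have hc : (0 : ℝ) < 2 ^ (n - 1) := by positivity
  ext x
  simp only [Set.mem_inter_iff, Set.mem_image, Set.mem_pi, Set.mem_univ, forall_true_left]
  constructor
  · rintro ⟨⟨y, hyK, hyx⟩, ⟨w, hwL, hwx⟩⟩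
    intro i
    by_cases h : (i : ℕ) = n - 1
    · rw [if_pos h]
      have : x i = 0 := by
        rw [← hyx, projPerp_lastUnit_apply hn, if_pos h]
      simp [this]
    · rw [if_neg h]
      have hxy : x i = y i := by
        rw [← hyx, projPerp_lastUnit_apply hn, if_neg h]
      have hxw : x i = w i := by
        rw [← hwx, projPerp_lastUnit_apply hn, if_neg h]
      obtain ⟨z, hz⟩ := hwL i
      have hb : |x i| ≤ 1 := by rw [hxy]; exact Kex_subset_cube hyK i
      have hzb : |z| ≤ 1 := by
        rw [hxw, hz] at hb
        have : |((z : ℤ) : ℝ)| = ((|z| : ℤ) : ℝ) := by push_cast; ring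
        rw [this] at hb
        exact_mod_cast hb
      have hxz : x i = (z : ℝ) := by rw [hxw, hz]
      obtain ⟨hzl, hzr⟩ := abs_le.mp hzb
      interval_cases z <;> simp [hxz]
  · intro hx
    have hx' : ∀ i : Fin n,
        x i ∈ (if (i : ℕ) = n - 1 then ({0} : Set ℝ) else {-1, 0, 1}) := hx
    have hxlast : ∀ i : Fin n, (i : ℕ) = n - 1 → x i = 0 := by
      intro i h
      have := hx' i
      rw [if_pos h] at this
      simpa using this
    have hxoth : ∀ i : Fin n, (i : ℕ) ≠ n - 1 → (x i = -1 ∨ x i = 0 ∨ x i = 1) := by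
      intro i h
      have := hx' i
      rw [if_neg h] at this
      simpa [Set.mem_insert_iff] using this
    have hxbound : ∀ i, |x i| ≤ 1 := by
      intro i
      by_cases h : (i : ℕ) = n - 1
      · rw [hxlast i h]; norm_num
      · rcases hxoth i h with h' | h' | h' <;> rw [h'] <;> norm_num
    have hPx : projPerp (lastUnit n) x = x := by
      funext i
      rw [projPerp_lastUnit_apply hn]
      by_cases h : (i : ℕ) = n - 1
      · rw [if_pos h, hxlast i h]
      · rw [if_neg h]
    constructor
    · -- x is the projection of a point of Kex
      set S : ℝ := ∑ j, x j * uvec n j with hS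
      set t : ℝ := -S / 2 ^ (n - 1) with ht
      set y : Fin n → ℝ := x + t • lastUnit n with hy
      have hyj : ∀ j, y j = x j + t * lastUnit n j := fun j => rfl
      have hSbound : |S| ≤ 2 ^ (n - 1) := by
        have h1 : |S| ≤ ∑ j, |x j * uvec n j| := Finset.abs_sum_le_sum_abs _ _
        have h2 : ∀ j : Fin n, |x j * uvec n j|
            ≤ (2 : ℝ) ^ (j : ℕ) - 2 ^ (j : ℕ) * lastUnit n j := by
          intro j
          rw [abs_mul]
          by_cases h : (j : ℕ) = n - 1
          · rw [hxlast j h]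
            simp [lastUnit, h, uvec]
          · have : lastUnit n j = 0 := by simp [lastUnit, h]
            rw [this]
            have : |uvec n j| = (2 : ℝ) ^ (j : ℕ) := by
              rw [show uvec n j = (2 : ℝ) ^ (j : ℕ) from rfl, abs_of_pos (by positivity)]
            rw [this]
            have hb := hxbound j
            nlinarith [pow_pos (by norm_num : (0:ℝ) < 2) (j : ℕ)]
        have h3 : ∑ j : Fin n, ((2 : ℝ) ^ (j : ℕ) - 2 ^ (j : ℕ) * lastUnit n j)
            = (2 ^ n - 1) - 2 ^ (n - 1) := by
          rw [Finset.sum_sub_distrib]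
          rw [sum_mul_lastUnit hn (fun j : Fin n => (2 : ℝ) ^ (j : ℕ))]
          rw [Fin.sum_univ_eq_sum_range (fun i => (2:ℝ) ^ i), geom_sum_two_real]
        have h4 : (2 : ℝ) ^ n = 2 ^ (n - 1) * 2 := by
          rw [← pow_succ]
          congr 1
          omega
        calc |S| ≤ ∑ j, |x j * uvec n j| := h1
          _ ≤ ∑ j : Fin n, ((2 : ℝ) ^ (j : ℕ) - 2 ^ (j : ℕ) * lastUnit n j) :=
              Finset.sum_le_sum fun j _ => h2 j
          _ = (2 ^ n - 1) - 2 ^ (n - 1) := h3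
          _ ≤ 2 ^ (n - 1) := by rw [h4]; linarith
      have hyK : y ∈ Kex n := by
        apply subset_convexHull ℝ _
        left
        constructor
        · intro i
          rw [hyj i]
          by_cases h : (i : ℕ) = n - 1
          · have hl : lastUnit n i = 1 := by simp [lastUnit, h]
            rw [hxlast i h, hl, zero_add, mul_one, ht, abs_div, abs_neg,
              abs_of_pos hc]
            rw [div_le_one hc]
            exact hSbound
          · have hl : lastUnit n i = 0 := by simp [lastUnit, h]
            rw [hl, mul_zero, add_zero]
            exact hxbound i
        · show ∑ j, y j * uvec n j = 0
          have hsplit : ∑ j, y j * uvec n j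
              = S + t * ∑ j, lastUnit n j * uvec n j := by
            rw [hS, Finset.mul_sum, ← Finset.sum_add_distrib]
            refine Finset.sum_congr rfl fun j _ => ?_
            rw [hyj j]; ring
          rw [hsplit, sum_lastUnit_mul_uvec hn, ht]
          field_simp
          ring
      refine ⟨y, hyK, ?_⟩
      funext i
      rw [projPerp_lastUnit_apply hn]
      by_cases h : (i : ℕ) = n - 1
      · rw [if_pos h, hxlast i h]
      · rw [if_neg h, hyj i]
        have hl : lastUnit n i = 0 := by simp [lastUnit, h]
        rw [hl, mul_zero, add_zero]
    · -- x is the projection of a lattice point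
      refine ⟨x, ?_, hPx⟩
      intro i
      by_cases h : (i : ℕ) = n - 1
      · exact ⟨0, by rw [hxlast i h]; simp⟩
      · rcases hxoth i h with h' | h' | h'
        · exact ⟨-1, by rw [h']; simp⟩
        · exact ⟨0, by rw [h']; simp⟩
        · exact ⟨1, by rw [h']; simp⟩

lemma pi_ncard (hn : 1 ≤ n) :
    (Set.pi Set.univ
        (fun i : Fin n => if (i : ℕ) = n - 1 then ({0} : Set ℝ) else {-1, 0, 1})).ncard
      = 3 ^ (n - 1) := by
  rw [← Nat.card_coe_set_eq, Nat.card_congr (Equiv.Set.univPi _), Nat.card_pi]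
  have h3 : Nat.card ({-1, 0, 1} : Set ℝ) = 3 := by
    rw [Nat.card_coe_set_eq,
      Set.ncard_insert_of_notMem (by norm_num) (Set.toFinite _),
      Set.ncard_insert_of_notMem (by norm_num) (Set.toFinite _), Set.ncard_singleton]
  have h1 : Nat.card ({0} : Set ℝ) = 1 := by
    rw [Nat.card_coe_set_eq, Set.ncard_singleton]
  have hterm : ∀ i : Fin n,
      Nat.card ↥(if (i : ℕ) = n - 1 then ({0} : Set ℝ) else {-1, 0, 1})
        = if i = (⟨n - 1, by omega⟩ : Fin n) then 1 else 3 := by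
    intro i
    by_cases h : (i : ℕ) = n - 1
    · simp only [if_pos h, if_pos (Fin.ext h : i = (⟨n - 1, by omega⟩ : Fin n)), h1]
    · have h' : ¬ (i = (⟨n - 1, by omega⟩ : Fin n)) := fun hh => h (by rw [hh])
      simp only [if_neg h, if_neg h', h3]
  rw [Finset.prod_congr rfl fun i _ => hterm i]
  rw [← Finset.mul_prod_erase Finset.univ _
    (Finset.mem_univ (⟨n - 1, by omega⟩ : Fin n)), if_pos rfl, one_mul]
  rw [Finset.prod_congr rfl fun i hi => if_neg (Finset.ne_of_mem_erase hi)]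
  rw [Finset.prod_const]
  congr 1
  rw [Finset.card_erase_of_mem (Finset.mem_univ _), Finset.card_univ, Fintype.card_fin]

end Aux4


/-- A body showing that the projection-counting lemma is essentially sharp:
`eₙ ∈ K`, the projection of `K` onto `eₙ^⊥` contains `3^{n-1}` points of the
projected lattice, yet the lattice points of `K` project onto the origin only. -/
theorem projection_count_sharp (n : ℕ) (hn : 2 ≤ n) :
    lastUnit n ∈ Kex n ∧
    ((projPerp (lastUnit n) '' Kex n) ∩ (projPerp (lastUnit n) '' intLat n)).ncard =
      3 ^ (n - 1) ∧
    projPerp (lastUnit n) '' (Kex n ∩ intLat n) = {0} := by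
  have hn1 : 1 ≤ n := by omega
  refine ⟨subset_convexHull ℝ _ (Or.inr (Set.mem_insert _ _)), ?_,
    proj_image_lattice_eq_zero hn1⟩
  rw [inter_eq_pi hn1, pi_ncard hn1]
end

section
/- Let n ≥ 1 and let K ⊆ ℝ^n be an unconditional convex body. Then 3^{n(n-1)} · #(K)^{n-1} ≥ ∏_{i=1}^n #(K ∩ e_i^⊥); equivalently, #(K)^{(n-1)/n} ≥ 3^{-(n-1)} (∏_{i=1}^n #(K ∩ e_i^⊥))^{1/n}. -/
open scoped BigOperators

/-- `K` is unconditional: closed under sign changes of the coordinates. -/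
def Unconditional {n : ℕ} (K : Set (Fin n → ℝ)) : Prop :=
  ∀ x ∈ K, ∀ ε : Fin n → ℝ, (∀ i, ε i = 1 ∨ ε i = -1) → (fun i => ε i * x i) ∈ K

private lemma upd_mem {n : ℕ} {K : Set (Fin n → ℝ)} (hconv : Convex ℝ K)
    (huncond : Unconditional K) {x : Fin n → ℝ} (hx : x ∈ K) (j : Fin n) {cc : ℝ}
    (hcc : |cc| ≤ |x j|) : Function.update x j cc ∈ K := by
  classical
  have hflip : Function.update x j (-(x j)) ∈ K := by
    have h := huncond x hx (fun k => if k = j then (-1:ℝ) else 1)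
      (fun k => by by_cases hk : k = j <;> simp [hk])
    have he : Function.update x j (-(x j)) = fun k => (if k = j then (-1:ℝ) else 1) * x k := by
      funext k
      by_cases hk : k = j
      · subst hk; simp
      · simp [Function.update_of_ne hk, hk]
    rw [he]; exact h
  have hseg : cc ∈ segment ℝ (-(x j)) (x j) := by
    rcases le_total 0 (x j) with h0 | h0
    · rw [segment_eq_Icc (by linarith : -(x j) ≤ x j)]
      rw [abs_of_nonneg h0] at hcc
      exact Set.mem_Icc.mpr (abs_le.mp hcc)
    · rw [segment_symm, segment_eq_Icc (by linarith : x j ≤ -(x j))]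
      rw [abs_of_nonpos h0] at hcc
      rcases abs_le.mp hcc with ⟨h1, h2⟩
      exact Set.mem_Icc.mpr ⟨by linarith, by linarith⟩
  obtain ⟨u, v, hu, hv, huv, hrep⟩ := hseg
  have he2 : Function.update x j cc = u • (Function.update x j (-(x j))) + v • x := by
    funext k
    by_cases hk : k = j
    · subst hk
      simp only [Function.update_self, Pi.add_apply, Pi.smul_apply, smul_eq_mul]
      simp only [smul_eq_mul] at hrep
      linarith [hrep]
    · simp only [Function.update_of_ne hk, Pi.add_apply, Pi.smul_apply, smul_eq_mul]
      rw [← add_mul, huv, one_mul]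
  rw [he2]
  exact hconv hflip hx hu hv huv

private lemma mono_mem {n : ℕ} {K : Set (Fin n → ℝ)} (hconv : Convex ℝ K)
    (huncond : Unconditional K) {x y : Fin n → ℝ} (hx : x ∈ K)
    (h : ∀ j, |y j| ≤ |x j|) : y ∈ K := by
  classical
  suffices H : ∀ (s : Finset (Fin n)) (x : Fin n → ℝ), x ∈ K →
      (∀ j, |y j| ≤ |x j|) → (∀ j, j ∉ s → y j = x j) → y ∈ K by
    exact H Finset.univ x hx h (fun j hj => absurd (Finset.mem_univ j) hj)
  intro s
  induction s using Finset.induction_on with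
  | empty =>
      intro x hx _ h0
      have : y = x := funext fun j => h0 j (by simp)
      rwa [this]
  | @insert j s hjs ih =>
      intro x hx hle h0
      refine ih (Function.update x j (y j)) (upd_mem hconv huncond hx j (hle j)) ?_ ?_
      · intro k
        by_cases hk : k = j
        · subst hk; simp
        · rw [Function.update_of_ne hk]; exact hle k
      · intro k hk
        by_cases hkj : k = j
        · subst hkj; simp
        · rw [Function.update_of_ne hkj]
          exact h0 k (by simp [hkj, hk])

/-- Discrete Meyer inequality for unconditional convex bodies. -/
theorem discrete_meyer_unconditional (n : ℕ) (hn : 1 ≤ n) (K : Set (Fin n → ℝ))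
    (hconv : Convex ℝ K) (hcomp : IsCompact K) (hne : K.Nonempty)
    (huncond : Unconditional K) :
    ∏ i : Fin n, latCount (K ∩ {x : Fin n → ℝ | x i = 0}) ≤
      3 ^ (n * (n - 1)) * latCount K ^ (n - 1) := by
  classical
  set c : (Fin n → ℤ) → (Fin n → ℝ) := fun z i => ((z i : ℤ) : ℝ) with hcdef
  have hcinj : Function.Injective c := by
    intro a b hab
    funext i
    have : ((a i : ℤ) : ℝ) = ((b i : ℤ) : ℝ) := congrFun hab i
    exact_mod_cast this
  have hcount : ∀ (A : Set (Fin n → ℝ)) (G : Finset (Fin n → ℤ)),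
      (∀ z, z ∈ G ↔ c z ∈ A) → latCount A = G.card := by
    intro A G hG
    have himg : A ∩ {x : Fin n → ℝ | ∀ i, ∃ z : ℤ, x i = (z : ℝ)} = c '' ↑G := by
      ext x
      constructor
      · rintro ⟨hA, hl⟩
        have hx : c (fun i => (hl i).choose) = x :=
          funext fun i => ((hl i).choose_spec).symm
        exact ⟨fun i => (hl i).choose,
          Finset.mem_coe.mpr ((hG _).mpr (by rw [hx]; exact hA)), hx⟩
      · rintro ⟨z, hz, rfl⟩
        exact ⟨(hG z).mp (Finset.mem_coe.mp hz), fun i => ⟨z i, rfl⟩⟩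
    unfold latCount
    rw [himg, Set.ncard_image_of_injective _ hcinj, Set.ncard_coe_finset]
  -- finiteness of the lattice-point set
  obtain ⟨r, hr⟩ := isBounded_iff_forall_norm_le.mp hcomp.isBounded
  have hSfin : {z : Fin n → ℤ | c z ∈ K}.Finite := by
    apply Set.Finite.subset (Set.finite_Icc (fun _ : Fin n => -⌈r⌉) (fun _ => ⌈r⌉))
    intro z hz
    rw [Set.mem_Icc]
    have hzi : ∀ i, -⌈r⌉ ≤ z i ∧ z i ≤ ⌈r⌉ := by
      intro i
      have h1 : ‖c z i‖ ≤ ‖c z‖ := norm_le_pi_norm (c z) i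
      have h2 : ‖c z‖ ≤ r := hr _ hz
      have h3 : |((z i : ℤ) : ℝ)| ≤ r := by
        rw [← Real.norm_eq_abs]; exact le_trans h1 h2
      have h4 : |((z i : ℤ) : ℝ)| ≤ (⌈r⌉ : ℝ) := le_trans h3 (Int.le_ceil r)
      have h5 : |z i| ≤ ⌈r⌉ := by
        rw [← Int.cast_abs] at h4; exact_mod_cast h4
      exact abs_le.mp h5
    exact ⟨fun i => (hzi i).1, fun i => (hzi i).2⟩
  set F : Finset (Fin n → ℤ) := hSfin.toFinset with hFdef
  have hmemF : ∀ z, z ∈ F ↔ c z ∈ K := by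
    intro z; rw [hFdef, Set.Finite.mem_toFinset]; rfl
  -- 0 ∈ K
  obtain ⟨x0, hx0⟩ := hne
  have h0K : (0 : Fin n → ℝ) ∈ K :=
    mono_mem hconv huncond hx0 (fun j => by simp [abs_nonneg])
  have hF0 : (fun _ => (0:ℤ)) ∈ F := by
    rw [hmemF]
    have : c (fun _ => (0:ℤ)) = (0 : Fin n → ℝ) := by funext i; simp [hcdef]
    rw [this]; exact h0K
  have hFne : F.Nonempty := ⟨_, hF0⟩
  -- the maximal coordinates
  set R : Fin n → ℕ := fun i => ((F.image fun z => (z i).natAbs).max' (hFne.image _)) with hRdef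
  have hRle : ∀ (i : Fin n), ∀ z ∈ F, (z i).natAbs ≤ R i := by
    intro i z hz
    exact Finset.le_max' (F.image fun z => (z i).natAbs) _ (Finset.mem_image_of_mem _ hz)
  have hRex : ∀ i : Fin n, ∃ z ∈ F, (z i).natAbs = R i := by
    intro i
    have h := Finset.max'_mem (F.image fun z => (z i).natAbs) (hFne.image _)
    rw [Finset.mem_image] at h
    obtain ⟨z, hz, hz2⟩ := h
    exact ⟨z, hz, hz2⟩
  clear_value R
  -- the sections
  set Fi : Fin n → Finset (Fin n → ℤ) := fun i => F.filter (fun z => z i = 0) with hFidef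
  have hNi : ∀ i : Fin n, latCount (K ∩ {x : Fin n → ℝ | x i = 0}) = (Fi i).card := by
    intro i
    apply hcount
    intro z
    rw [hFidef]
    simp only [Finset.mem_filter, hmemF, Set.mem_inter_iff, Set.mem_setOf_eq]
    constructor
    · rintro ⟨h1, h2⟩
      refine ⟨h1, ?_⟩
      show ((z i : ℤ) : ℝ) = 0
      rw [h2]; simp
    · rintro ⟨h1, h2⟩
      refine ⟨h1, ?_⟩
      have : ((z i : ℤ) : ℝ) = 0 := h2
      exact_mod_cast this
  have hN : latCount K = F.card := hcount K F hmemF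
  -- single points (R i)·e_i are in K
  have hsingle : ∀ i : Fin n, c (fun j => if j = i then ((R i : ℕ) : ℤ) else 0) ∈ K := by
    intro i
    obtain ⟨z, hzF, hzR⟩ := hRex i
    refine mono_mem hconv huncond ((hmemF z).mp hzF) ?_
    intro j
    by_cases hj : j = i
    · subst hj
      show |((if j = j then ((R j : ℕ) : ℤ) else 0 : ℤ) : ℝ)| ≤ |((z j : ℤ) : ℝ)|
      rw [if_pos rfl, ← hzR]
      push_cast [Nat.cast_natAbs]
      simp [abs_abs]
    · show |((if j = i then ((R i : ℕ) : ℤ) else 0 : ℤ) : ℝ)| ≤ |((z j : ℤ) : ℝ)|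
      rw [if_neg hj]
      simp [abs_nonneg]
  -- half-shrink map on ℤ
  set hd : ℤ → ℤ := fun a => if 0 ≤ a then ((a.toNat / 2 : ℕ) : ℤ)
      else -(((-a).toNat / 2 : ℕ) : ℤ) with hhd
  have hd_abs : ∀ a : ℤ, 2 * (hd a).natAbs ≤ a.natAbs := by
    intro a; simp only [hhd]; split <;> omega
  have hd_res : ∀ a : ℤ, a - 2 * hd a = -1 ∨ a - 2 * hd a = 0 ∨ a - 2 * hd a = 1 := by
    intro a; simp only [hhd]; split <;> omega
  clear_value hd
  -- KEY inequality: (2 R i + 1) * N_i ≤ 3^n * N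
  have key : ∀ i : Fin n, (2 * R i + 1) * (Fi i).card ≤ 3 ^ n * F.card := by
    intro i
    set s : ℕ := R i / 2 with hs
    set T : Finset ℤ := Finset.Icc (-(s : ℤ)) (s : ℤ) with hT
    set φ : ℤ → (Fin n → ℤ) → (Fin n → ℤ) :=
      fun t z j => if j = i then t else hd (z j) with hφ
    have hTcard : T.card = 2 * s + 1 := by
      rw [hT, Int.card_Icc]
      omega
    have hn1 : n - 1 + 1 = n := by omega
    have h3s : 2 * R i + 1 ≤ 3 * (2 * s + 1) := by omega
    have hφmem : ∀ t ∈ T, ∀ z ∈ Fi i, φ t z ∈ F ∧ (φ t z) i = t := by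
      intro t ht z hz
      rw [hFidef, Finset.mem_filter] at hz
      have hzK : c z ∈ K := (hmemF z).mp hz.1
      have hmid : (1/2 : ℝ) • c z
          + (1/2 : ℝ) • (c fun j => if j = i then ((R i : ℕ) : ℤ) else 0) ∈ K :=
        hconv hzK (hsingle i) (by norm_num) (by norm_num) (by norm_num)
      have hKmem : c (φ t z) ∈ K := by
        refine mono_mem hconv huncond hmid ?_
        intro j
        by_cases hj : j = i
        · subst hj
          have h1 : c (φ t z) j = (t : ℝ) := by simp [hcdef, hφ]
          have h2 : ((1/2 : ℝ) • c z
              + (1/2 : ℝ) • (c fun k => if k = j then ((R j : ℕ) : ℤ) else 0)) j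
              = (R j : ℝ) / 2 := by
            simp only [Pi.add_apply, Pi.smul_apply, smul_eq_mul, hcdef]
            rw [hz.2]
            simp
            ring
          rw [h1, h2]
          rw [abs_of_nonneg (by positivity : (0:ℝ) ≤ (R j : ℝ) / 2)]
          have hTt := Finset.mem_Icc.mp ht
          have h2s : 2 * s ≤ R j := by omega
          rw [abs_le]
          constructor
          · have hc1 : -((s:ℕ):ℝ) ≤ (t:ℝ) := by exact_mod_cast hTt.1
            have hc2 : ((2*s:ℕ):ℝ) ≤ ((R j :ℕ):ℝ) := by exact_mod_cast h2s
            push_cast at hc1 hc2 ⊢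
            linarith
          · have hc1 : (t:ℝ) ≤ ((s:ℕ):ℝ) := by exact_mod_cast hTt.2
            have hc2 : ((2*s:ℕ):ℝ) ≤ ((R j:ℕ):ℝ) := by exact_mod_cast h2s
            push_cast at hc1 hc2 ⊢
            linarith
        · have h1 : c (φ t z) j = ((hd (z j) : ℤ) : ℝ) := by simp [hcdef, hφ, hj]
          have h2 : ((1/2 : ℝ) • c z
              + (1/2 : ℝ) • (c fun k => if k = i then ((R i : ℕ) : ℤ) else 0)) j
              = ((z j : ℤ) : ℝ) / 2 := by
            simp only [Pi.add_apply, Pi.smul_apply, smul_eq_mul, hcdef, if_neg hj]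
            simp
            ring
          rw [h1, h2, abs_div]
          have h3 := hd_abs (z j)
          have h4 : ((2 * (hd (z j)).natAbs : ℕ) : ℝ) ≤ (((z j).natAbs : ℕ) : ℝ) := by
            exact_mod_cast h3
          push_cast [Nat.cast_natAbs] at h4
          rw [abs_of_nonneg (by norm_num : (0:ℝ) ≤ (2:ℝ))]
          linarith
      exact ⟨(hmemF _).mpr hKmem, by simp [hφ]⟩
    have hmult : ∀ t ∈ T, (Fi i).card ≤ 3 ^ (n - 1) * (F.filter fun z => z i = t).card := by
      intro t ht
      set Res : Finset (Fin n → ℤ) :=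
        Fintype.piFinset (fun j => if j = i then ({0} : Finset ℤ)
          else ({-1, 0, 1} : Finset ℤ)) with hRes
      have hcard : (Fi i).card ≤ ((F.filter fun z => z i = t) ×ˢ Res).card := by
        apply Finset.card_le_card_of_injOn
          (fun z => (φ t z, fun j => if j = i then 0 else z j - 2 * hd (z j)))
        · intro z hz
          rw [Finset.mem_coe, Finset.mem_product]
          obtain ⟨h1, h2⟩ := hφmem t ht z hz
          constructor
          · rw [Finset.mem_filter]; exact ⟨h1, h2⟩
          · rw [hRes, Fintype.mem_piFinset]
            intro j
            by_cases hj : j = i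
            · simp [hj]
            · simp only [if_neg hj]
              rcases hd_res (z j) with h | h | h <;> simp [h]
        · intro z1 hz1 z2 hz2 heq
          rw [Prod.mk.injEq] at heq
          have hz1' := Finset.mem_filter.mp (Finset.mem_coe.mp hz1)
          have hz2' := Finset.mem_filter.mp (Finset.mem_coe.mp hz2)
          funext j
          by_cases hj : j = i
          · subst hj; rw [hz1'.2, hz2'.2]
          · have e1 := congrFun heq.1 j
            have e2 := congrFun heq.2 j
            simp only [hφ, if_neg hj] at e1 e2
            omega
      rw [Finset.card_product] at hcard
      have hResCard : Res.card = 3 ^ (n - 1) := by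
        rw [hRes, Fintype.card_piFinset]
        have h1 : ∀ j : Fin n,
            ((if j = i then ({0} : Finset ℤ) else ({-1,0,1} : Finset ℤ))).card
              = if j = i then 1 else 3 := by
          intro j
          split
          · rfl
          · decide
        rw [Finset.prod_congr rfl (fun j _ => h1 j)]
        rw [← Finset.mul_prod_erase Finset.univ _ (Finset.mem_univ i), if_pos rfl, one_mul]
        rw [Finset.prod_congr rfl (fun j hj => if_neg (Finset.ne_of_mem_erase hj))]
        rw [Finset.prod_const, Finset.card_erase_of_mem (Finset.mem_univ i),
          Finset.card_univ, Fintype.card_fin]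
      rw [hResCard] at hcard
      rwa [mul_comm] at hcard
    have hsum : ∑ t ∈ T, (F.filter fun z => z i = t).card ≤ F.card := by
      have h1 : (F.filter fun z => z i ∈ T).card
          = ∑ t ∈ T, ((F.filter fun z => z i ∈ T).filter fun z => z i = t).card :=
        Finset.card_eq_sum_card_fiberwise (fun z hz => (Finset.mem_filter.mp hz).2)
      have h2 : ∀ t ∈ T, ((F.filter fun z => z i ∈ T).filter fun z => z i = t)
          = F.filter fun z => z i = t := by
        intro t ht
        rw [Finset.filter_filter]
        apply Finset.filter_congr
        intro z _
        constructor
        · exact fun h => h.2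
        · exact fun h => ⟨by rw [h]; exact ht, h⟩
      calc ∑ t ∈ T, (F.filter fun z => z i = t).card
          = ∑ t ∈ T, ((F.filter fun z => z i ∈ T).filter fun z => z i = t).card :=
            Finset.sum_congr rfl (fun t ht => by rw [h2 t ht])
        _ = (F.filter fun z => z i ∈ T).card := h1.symm
        _ ≤ F.card := Finset.card_filter_le _ _
    calc (2 * R i + 1) * (Fi i).card ≤ (3 * (2 * s + 1)) * (Fi i).card :=
          Nat.mul_le_mul_right _ h3s
      _ = 3 * ∑ _t ∈ T, (Fi i).card := by
          rw [Finset.sum_const, hTcard, smul_eq_mul]; ring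
      _ ≤ 3 * ∑ t ∈ T, 3 ^ (n-1) * (F.filter fun z => z i = t).card :=
          Nat.mul_le_mul_left _ (Finset.sum_le_sum hmult)
      _ = (3 * 3 ^ (n - 1)) * ∑ t ∈ T, (F.filter fun z => z i = t).card := by
          rw [Finset.mul_sum, Finset.mul_sum]
          exact Finset.sum_congr rfl fun t _ => by ring
      _ = 3 ^ n * ∑ t ∈ T, (F.filter fun z => z i = t).card := by
          rw [← pow_succ', hn1]
      _ ≤ 3 ^ n * F.card := Nat.mul_le_mul_left _ hsum
  -- box bound
  have hbox : ∀ i : Fin n, (2 * R i + 1) * (Fi i).card ≤ ∏ j, (2 * R j + 1) := by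
    intro i
    have hsub : Fi i ⊆ Fintype.piFinset
        (fun j => if j = i then ({0} : Finset ℤ) else Finset.Icc (-(R j : ℤ)) (R j)) := by
      intro z hz
      rw [hFidef, Finset.mem_filter] at hz
      rw [Fintype.mem_piFinset]
      intro j
      by_cases hj : j = i
      · subst hj; simp [hz.2]
      · rw [if_neg hj, Finset.mem_Icc]
        have := hRle j z hz.1
        omega
    have hcard := Finset.card_le_card hsub
    rw [Fintype.card_piFinset] at hcard
    have h1 : ∀ j : Fin n,
        ((if j = i then ({0} : Finset ℤ) else Finset.Icc (-(R j:ℤ)) (R j))).card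
          = if j = i then 1 else (2 * R j + 1) := by
      intro j
      split
      · rfl
      · rw [Int.card_Icc]; omega
    rw [Finset.prod_congr rfl (fun j _ => h1 j)] at hcard
    have h2 : ∏ j : Fin n, (if j = i then 1 else (2 * R j + 1))
        = ∏ j ∈ Finset.univ.erase i, (2 * R j + 1) := by
      rw [← Finset.mul_prod_erase Finset.univ _ (Finset.mem_univ i), if_pos rfl, one_mul]
      exact Finset.prod_congr rfl (fun j hj => if_neg (Finset.ne_of_mem_erase hj))
    rw [h2] at hcard
    calc (2 * R i + 1) * (Fi i).card
        ≤ (2 * R i + 1) * ∏ j ∈ Finset.univ.erase i, (2 * R j + 1) :=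
          Nat.mul_le_mul_left _ hcard
      _ = ∏ j, (2 * R j + 1) :=
          Finset.mul_prod_erase Finset.univ (fun j => 2 * R j + 1) (Finset.mem_univ i)
  -- final assembly
  have en : n - 1 + 1 = n := by omega
  have hnne : n ≠ 0 := by omega
  set N := F.card with hNdef
  set P := ∏ i : Fin n, (Fi i).card with hPdef
  set B := ∏ i : Fin n, (2 * R i + 1) with hBdef
  have hBpos : 0 < B := Finset.prod_pos fun i _ => by positivity
  have hPB : P * B ≤ B ^ n := by
    calc P * B = ∏ i : Fin n, ((Fi i).card * (2 * R i + 1)) := by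
          rw [hPdef, hBdef, ← Finset.prod_mul_distrib]
      _ ≤ ∏ _i : Fin n, B := Finset.prod_le_prod (fun _ _ => Nat.zero_le _)
          (fun i _ => by rw [mul_comm]; exact hbox i)
      _ = B ^ n := by rw [Finset.prod_const, Finset.card_univ, Fintype.card_fin]
  have hP : P ≤ B ^ (n - 1) := by
    have hBn : B ^ n = B ^ (n - 1) * B := by rw [← pow_succ, en]
    rw [hBn] at hPB
    exact Nat.le_of_mul_le_mul_right hPB hBpos
  have hBP : B * P ≤ 3 ^ (n * n) * N ^ n := by
    calc B * P = ∏ i : Fin n, ((2 * R i + 1) * (Fi i).card) := by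
          rw [hBdef, hPdef, ← Finset.prod_mul_distrib]
      _ ≤ ∏ _i : Fin n, (3 ^ n * N) := Finset.prod_le_prod (fun _ _ => Nat.zero_le _)
          (fun i _ => key i)
      _ = (3 ^ n * N) ^ n := by rw [Finset.prod_const, Finset.card_univ, Fintype.card_fin]
      _ = 3 ^ (n * n) * N ^ n := by rw [mul_pow, ← pow_mul]
  have e1 : P ^ n * B ^ (n - 1) = (B * P) ^ (n - 1) * P := by
    rw [mul_pow, mul_assoc, ← pow_succ, en]
    ring
  have e2 : (3 ^ (n*n) * N ^ n) ^ (n - 1) = (3 ^ (n * (n-1)) * N ^ (n-1)) ^ n := by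
    rw [mul_pow, mul_pow, ← pow_mul, ← pow_mul, ← pow_mul, ← pow_mul]
    congr 1
    · congr 1
      ring
    · congr 1
      ring
  have hfinal : P ^ n ≤ (3 ^ (n * (n-1)) * N ^ (n-1)) ^ n := by
    apply Nat.le_of_mul_le_mul_right _ (pow_pos hBpos (n-1))
    calc P ^ n * B ^ (n-1) = (B * P) ^ (n-1) * P := e1
      _ ≤ (3 ^ (n*n) * N ^ n) ^ (n-1) * B ^ (n-1) :=
          Nat.mul_le_mul (Nat.pow_le_pow_left hBP _) hP
      _ = (3 ^ (n * (n-1)) * N ^ (n-1)) ^ n * B ^ (n-1) := by rw [e2]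
  have hPle : P ≤ 3 ^ (n * (n-1)) * N ^ (n-1) :=
    (Nat.pow_le_pow_iff_left hnne).mp hfinal
  calc ∏ i : Fin n, latCount (K ∩ {x : Fin n → ℝ | x i = 0}) = P :=
      Finset.prod_congr rfl (fun i _ => hNi i)
    _ ≤ 3 ^ (n * (n-1)) * N ^ (n-1) := hPle
    _ = 3 ^ (n * (n-1)) * latCount K ^ (n-1) := by rw [hN]
end

section
/- Let n ≥ 2 and for an integer h ≥ 1 let K_h = conv(([-1,1]^{n-1} × {0}) ∪ {h e_n, -h e_n}) ⊆ ℝ^n be the double pyramid over the cube [-1,1]^{n-1}. Then #(K_h) = 3^{n-1} + 2h, #(K_h ∩ e_i^⊥) = 3^{n-2} + 2h for 1 ≤ i ≤ n-1, #(K_h ∩ e_n^⊥) = 3^{n-1}, and consequently lim_{h → ∞} #(K_h)^{n-1} / (∏_{i=1}^n #(K_h ∩ e_i^⊥)) = 3^{-(n-1)}. -/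
open scoped BigOperators

/-- The cube `[-1,1]^{n-1} × {0}` in the hyperplane `eₙ^⊥ ⊆ ℝ^n`. -/
def cubeSlice (n : ℕ) : Set (Fin n → ℝ) :=
  {x | (∀ i : Fin n, (i : ℕ) < n - 1 → |x i| ≤ 1) ∧ ∀ i : Fin n, (i : ℕ) = n - 1 → x i = 0}

/-- The apex `h·eₙ`. -/
def apexVec (n h : ℕ) : Fin n → ℝ := fun i => if (i : ℕ) = n - 1 then (h : ℝ) else 0

/-- The double pyramid `K_h = conv(([-1,1]^{n-1} × {0}) ∪ {± h eₙ})`. -/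
noncomputable def Kh (n h : ℕ) : Set (Fin n → ℝ) :=
  convexHull ℝ (cubeSlice n ∪ {apexVec n h, -apexVec n h})

lemma Kh_eq (n h : ℕ) (hn : 2 ≤ n) (hh : 1 ≤ h) :
    Kh n h = {x : Fin n → ℝ | ∀ i : Fin n, (i : ℕ) < n - 1 →
      (h:ℝ) * |x i| + |x ⟨n-1, Nat.sub_lt (by omega) Nat.one_pos⟩| ≤ (h:ℝ)} := by
  have hpos : (0:ℝ) < h := by exact_mod_cast hh
  apply Set.Subset.antisymm
  · apply convexHull_min
    · rintro x (⟨hx1, hx2⟩ | hx)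
      · intro i hi
        rw [hx2 ⟨n-1, by omega⟩ rfl, abs_zero]
        have := hx1 i hi
        nlinarith [abs_nonneg (x i)]
      · rcases hx with hx | hx <;> subst hx <;> intro i hi <;>
          simp [apexVec, Nat.ne_of_lt hi]
    · intro x hx y hy a b ha hb hab i hi
      have hxl := hx i hi
      have hyl := hy i hi
      have t1 : |a * x i + b * y i| ≤ a * |x i| + b * |y i| :=
        (abs_add_le _ _).trans (by rw [abs_mul, abs_mul, abs_of_nonneg ha, abs_of_nonneg hb])
      have t2 : |a * x ⟨n-1, by omega⟩ + b * y ⟨n-1, by omega⟩| ≤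
          a * |x ⟨n-1, by omega⟩| + b * |y ⟨n-1, by omega⟩| :=
        (abs_add_le _ _).trans (by rw [abs_mul, abs_mul, abs_of_nonneg ha, abs_of_nonneg hb])
      have hsmul : (a • x + b • y) i = a * x i + b * y i := rfl
      have hsmul2 : (a • x + b • y) ⟨n-1, by omega⟩ =
          a * x ⟨n-1, by omega⟩ + b * y ⟨n-1, by omega⟩ := rfl
      simp only [Set.mem_setOf_eq, hsmul, hsmul2]
      nlinarith [abs_nonneg (x i), abs_nonneg (y i)]
  · intro x hx
    simp only [Set.mem_setOf_eq] at hx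
    set l : Fin n := ⟨n-1, by omega⟩ with hl
    have hL : |x l| ≤ h := by
      have := hx ⟨0, by omega⟩ (by simp; omega)
      nlinarith [abs_nonneg (x ⟨0, by omega⟩)]
    by_cases hcase : |x l| = h
    · have hz : ∀ i : Fin n, (i:ℕ) < n-1 → x i = 0 := by
        intro i hi
        have := hx i hi
        have : |x i| ≤ 0 := by nlinarith
        exact abs_eq_zero.mp (le_antisymm ‹|x i| ≤ 0› (abs_nonneg _))
      apply subset_convexHull
      rcases (abs_eq (le_of_lt hpos)).mp hcase with h1 | h1
      · right; left
        funext i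
        by_cases hi : (i:ℕ) = n - 1
        · have : i = l := Fin.ext hi
          rw [this, h1]; simp [apexVec, hl]
        · simp [apexVec, hi, hz i (by omega)]
      · right; right
        funext i
        by_cases hi : (i:ℕ) = n - 1
        · have : i = l := Fin.ext hi
          rw [this, h1]; simp [apexVec, hl, hi]
        · simp [apexVec, hi, hz i (by omega)]
    · have hLlt : |x l| < h := lt_of_le_of_ne hL hcase
      set t : ℝ := |x l| / h with ht
      have ht0 : 0 ≤ t := div_nonneg (abs_nonneg _) (le_of_lt hpos)
      have ht1 : t < 1 := (div_lt_one hpos).mpr hLlt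
      have h1t : (0:ℝ) < 1 - t := by linarith
      set y : Fin n → ℝ := fun i => if (i:ℕ) = n - 1 then 0 else x i / (1 - t) with hy
      set v : Fin n → ℝ := if 0 ≤ x l then apexVec n h else -apexVec n h with hv
      have hyc : y ∈ cubeSlice n := by
        constructor
        · intro i hi
          have hne : (i:ℕ) ≠ n - 1 := by omega
          simp only [hy, hne, if_false]
          rw [abs_div, abs_of_pos h1t, div_le_one h1t]
          have := hx i hi
          have : (h:ℝ) * |x i| ≤ h * (1 - t) := by
            rw [mul_sub, mul_one, ht, mul_div_cancel₀ _ (ne_of_gt hpos)]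
            linarith
          exact le_of_mul_le_mul_left this hpos
        · intro i hi; simp [hy, hi]
      have hvm : v ∈ ({apexVec n h, -apexVec n h} : Set (Fin n → ℝ)) := by
        by_cases hc : 0 ≤ x l <;> simp [hv, hc]
      have hxeq : x = (1 - t) • y + t • v := by
        funext i
        by_cases hi : (i:ℕ) = n - 1
        · have hil : i = l := Fin.ext hi
          have hvi : v i = if 0 ≤ x l then (h:ℝ) else -(h:ℝ) := by
            by_cases hc : 0 ≤ x l <;> simp [hv, hc, apexVec, hi]
          have : ((1-t) • y + t • v) i = (1-t) * y i + t * v i := rfl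
          rw [this, hvi]
          simp only [hy, hi, if_true, mul_zero, zero_add]
          by_cases hc : 0 ≤ x l
          · simp only [hc, if_true, ht]
            rw [div_mul_cancel₀ _ (ne_of_gt hpos), abs_of_nonneg hc, hil]
          · simp only [hc, if_false, ht]
            rw [mul_neg, div_mul_cancel₀ _ (ne_of_gt hpos),
              abs_of_neg (lt_of_not_ge hc), hil, neg_neg]
        · have : ((1-t) • y + t • v) i = (1-t) * y i + t * v i := rfl
          have hvi : v i = 0 := by
            by_cases hc : 0 ≤ x l <;> simp [hv, hc, apexVec, hi]
          rw [this, hvi, mul_zero, add_zero]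
          simp only [hy, hi, if_false]
          field_simp
      rw [hxeq]
      exact convex_convexHull ℝ _
        (subset_convexHull ℝ _ (Set.mem_union_left _ hyc))
        (subset_convexHull ℝ _ (Set.mem_union_right _ hvm))
        (by linarith) ht0 (by ring)

/-- Cube-type lattice points: coordinates in {-1,0,1} where `p` holds, `0` elsewhere. -/
noncomputable def cubeF (n : ℕ) (p : Fin n → Prop) [DecidablePred p] : Finset (Fin n → ℝ) :=
  Fintype.piFinset fun i => if p i then ({-1, 0, 1} : Finset ℝ) else {0}

/-- Apex-type lattice points: `z·eₙ` for integer `z ≠ 0`, `|z| ≤ h`. -/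
noncomputable def apexF (n h : ℕ) : Finset (Fin n → ℝ) :=
  ((Finset.Icc (-(h:ℤ)) (h:ℤ)).erase 0).image
    fun z : ℤ => fun i : Fin n => if (i : ℕ) = n - 1 then (z : ℝ) else 0

lemma mem_cubeF {n : ℕ} {p : Fin n → Prop} [DecidablePred p] {x : Fin n → ℝ} :
    x ∈ cubeF n p ↔ ∀ i, (p i → (x i = -1 ∨ x i = 0 ∨ x i = 1)) ∧ (¬ p i → x i = 0) := by
  simp only [cubeF, Fintype.mem_piFinset]
  constructor
  · intro hx i
    have := hx i
    constructor
    · intro hp; simpa [hp] using this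
    · intro hp; simpa [hp] using this
  · intro hx i
    by_cases hp : p i
    · simp only [hp, if_true, Finset.mem_insert, Finset.mem_singleton]
      exact (hx i).1 hp
    · simp only [hp, if_false, Finset.mem_singleton]
      exact (hx i).2 hp

lemma mem_apexF {n h : ℕ} {x : Fin n → ℝ} :
    x ∈ apexF n h ↔ ∃ z : ℤ, z ≠ 0 ∧ -(h:ℤ) ≤ z ∧ z ≤ h ∧
      x = fun i : Fin n => if (i : ℕ) = n - 1 then (z : ℝ) else 0 := by
  simp only [apexF, Finset.mem_image, Finset.mem_erase, Finset.mem_Icc]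
  constructor
  · rintro ⟨z, ⟨hz0, hz1, hz2⟩, rfl⟩; exact ⟨z, hz0, hz1, hz2, rfl⟩
  · rintro ⟨z, hz0, hz1, hz2, rfl⟩; exact ⟨z, ⟨hz0, hz1, hz2⟩, rfl⟩

lemma cubeF_card (n : ℕ) (p : Fin n → Prop) [DecidablePred p] :
    (cubeF n p).card = 3 ^ (Finset.univ.filter p).card := by
  rw [cubeF, Fintype.card_piFinset]
  have : ∀ i : Fin n, (if p i then ({-1, 0, 1} : Finset ℝ) else {0}).card =
      if p i then 3 else 1 := by
    intro i; by_cases hp : p i <;> simp [hp] <;> norm_num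
  simp only [this]
  rw [Finset.prod_ite, Finset.prod_const, Finset.prod_const, one_pow, mul_one]

lemma apexF_card (n h : ℕ) (hn : 2 ≤ n) :
    (apexF n h).card = 2 * h := by
  rw [apexF, Finset.card_image_of_injective]
  · rw [Finset.card_erase_of_mem (by simp), Int.card_Icc]
    omega
  · intro z w hzw
    have := congrFun hzw ⟨n - 1, by omega⟩
    simp at this
    exact_mod_cast this

lemma cubeF_disjoint_apexF (n h : ℕ) (hn : 2 ≤ n) (p : Fin n → Prop) [DecidablePred p]
    (hp : ¬ p ⟨n - 1, Nat.sub_lt (by omega) Nat.one_pos⟩) : Disjoint (cubeF n p) (apexF n h) := by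
  rw [Finset.disjoint_left]
  intro x hx hx'
  have h1 : x ⟨n - 1, by omega⟩ = 0 := (mem_cubeF.mp hx ⟨n - 1, by omega⟩).2 hp
  obtain ⟨z, hz0, -, -, rfl⟩ := mem_apexF.mp hx'
  simp at h1
  exact hz0 (by exact_mod_cast h1)

lemma lat_eq (n h : ℕ) (hn : 2 ≤ n) (hh : 1 ≤ h) :
    Kh n h ∩ {x : Fin n → ℝ | ∀ i, ∃ z : ℤ, x i = (z : ℝ)} =
      ↑(cubeF n (fun i => (i:ℕ) < n - 1) ∪ apexF n h) := by
  have hpos : (0:ℝ) < h := by exact_mod_cast hh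
  rw [Kh_eq n h hn hh]
  ext x
  simp only [Set.mem_inter_iff, Set.mem_setOf_eq, Finset.coe_union, Set.mem_union,
    Finset.mem_coe]
  constructor
  · rintro ⟨hS, hZ⟩
    obtain ⟨z, hzl⟩ := hZ ⟨n-1, by omega⟩
    by_cases hz0 : z = 0
    · left
      rw [mem_cubeF]
      intro i
      constructor
      · intro hi
        obtain ⟨w, hw⟩ := hZ i
        have h1 := hS i hi
        rw [hzl, hz0] at h1
        simp only [Int.cast_zero, abs_zero, add_zero] at h1
        have h2 : |x i| ≤ 1 := by nlinarith
        rw [hw] at h2 ⊢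
        rw [← Int.cast_abs] at h2
        have h3 : |w| ≤ 1 := by exact_mod_cast h2
        have h4 := abs_le.mp h3
        have : w = -1 ∨ w = 0 ∨ w = 1 := by omega
        rcases this with rfl | rfl | rfl <;> norm_num
      · intro hi
        have hieq : (i:ℕ) = n - 1 := by have := i.isLt; omega
        have : i = ⟨n-1, by omega⟩ := Fin.ext (by simpa using hieq)
        rw [this, hzl, hz0]; norm_num
    · right
      rw [mem_apexF]
      have hLb : |x ⟨n-1, by omega⟩| ≤ h := by
        have := hS ⟨0, by omega⟩ (by simp; omega)
        nlinarith [abs_nonneg (x ⟨0, by omega⟩)]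
      rw [hzl, ← Int.cast_abs] at hLb
      have hzh : |z| ≤ (h:ℤ) := by exact_mod_cast hLb
      refine ⟨z, hz0, (abs_le.mp hzh).1, (abs_le.mp hzh).2, ?_⟩
      funext i
      by_cases hi : (i:ℕ) = n - 1
      · have : i = ⟨n-1, by omega⟩ := Fin.ext hi
        rw [this, hzl]; simp [hi]
      · simp only [hi, if_false]
        have hlt : (i:ℕ) < n - 1 := by omega
        have h1 := hS i hlt
        rw [hzl, ← Int.cast_abs] at h1
        have hz1 : (1:ℤ) ≤ |z| := Int.one_le_abs hz0
        obtain ⟨w, hw⟩ := hZ i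
        rw [hw, ← Int.cast_abs] at h1
        have hcast : (h:ℝ) * (|w|:ℤ) + (|z|:ℤ) ≤ ((h:ℤ):ℝ) := by exact_mod_cast h1
        have : (h:ℤ) * |w| + |z| ≤ (h:ℤ) := by exact_mod_cast hcast
        have hw0 : w = 0 := by
          by_contra hw0
          have h4 : (1:ℤ) ≤ |w| := Int.one_le_abs hw0
          nlinarith
        rw [hw, hw0]; norm_num
  · rintro (hx | hx)
    · rw [mem_cubeF] at hx
      have hlast : x ⟨n-1, by omega⟩ = 0 := (hx ⟨n-1, by omega⟩).2 (by simp)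
      constructor
      · intro i hi
        rw [hlast, abs_zero, add_zero]
        rcases (hx i).1 hi with h1 | h1 | h1 <;> rw [h1] <;> norm_num
      · intro i
        by_cases hi : (i:ℕ) < n - 1
        · rcases (hx i).1 hi with h1 | h1 | h1
          · exact ⟨-1, by rw [h1]; norm_num⟩
          · exact ⟨0, by rw [h1]; norm_num⟩
          · exact ⟨1, by rw [h1]; norm_num⟩
        · exact ⟨0, by rw [(hx i).2 hi]; norm_num⟩
    · obtain ⟨z, hz0, hz1, hz2, rfl⟩ := mem_apexF.mp hx
      constructor
      · intro i hi
        have hne : (i:ℕ) ≠ n - 1 := by omega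
        simp only [hne, if_false, abs_zero, mul_zero, zero_add, if_true]
        rw [← Int.cast_abs]
        have : |z| ≤ (h:ℤ) := abs_le.mpr ⟨hz1, hz2⟩
        exact_mod_cast this
      · intro i
        by_cases hi : (i:ℕ) = n - 1
        · exact ⟨z, by show (if (i:ℕ) = n-1 then (z:ℝ) else 0) = _; rw [if_pos hi]⟩
        · exact ⟨0, by show (if (i:ℕ) = n-1 then (z:ℝ) else 0) = _; rw [if_neg hi]; norm_num⟩

lemma lat_eq_slice (n h : ℕ) (hn : 2 ≤ n) (hh : 1 ≤ h) (j : Fin n) (hj : (j:ℕ) < n - 1) :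
    (Kh n h ∩ {x : Fin n → ℝ | x j = 0}) ∩ {x : Fin n → ℝ | ∀ i, ∃ z : ℤ, x i = (z : ℝ)} =
      ↑(cubeF n (fun i => (i:ℕ) < n - 1 ∧ i ≠ j) ∪ apexF n h) := by
  have hre : (Kh n h ∩ {x : Fin n → ℝ | x j = 0}) ∩
        {x : Fin n → ℝ | ∀ i, ∃ z : ℤ, x i = (z : ℝ)} =
      (Kh n h ∩ {x : Fin n → ℝ | ∀ i, ∃ z : ℤ, x i = (z : ℝ)}) ∩ {x : Fin n → ℝ | x j = 0} := by
    ext x; simp only [Set.mem_inter_iff, Set.mem_setOf_eq]; tauto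
  rw [hre, lat_eq n h hn hh]
  ext x
  simp only [Finset.coe_union, Set.mem_union, Finset.mem_coe, Set.mem_inter_iff,
    Set.mem_setOf_eq]
  constructor
  · rintro ⟨hc | ha, hj0⟩
    · left
      rw [mem_cubeF] at hc ⊢
      intro i
      refine ⟨fun hi => (hc i).1 hi.1, fun hi => ?_⟩
      by_cases hij : i = j
      · rw [hij]; exact hj0
      · exact (hc i).2 (fun h' => hi ⟨h', hij⟩)
    · exact Or.inr ha
  · rintro (hc | ha)
    · rw [mem_cubeF] at hc
      have hj0 : x j = 0 := (hc j).2 (by simp)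
      refine ⟨Or.inl ?_, hj0⟩
      rw [mem_cubeF]
      intro i
      refine ⟨fun hi => ?_, fun hi => (hc i).2 (by tauto)⟩
      by_cases hij : i = j
      · exact Or.inr (Or.inl (hij ▸ hj0))
      · exact (hc i).1 ⟨hi, hij⟩
    · refine ⟨Or.inr ha, ?_⟩
      obtain ⟨z, hz0, hz1, hz2, rfl⟩ := mem_apexF.mp ha
      show (if (j:ℕ) = n - 1 then (z:ℝ) else 0) = 0
      rw [if_neg (by omega)]

lemma lat_eq_last (n h : ℕ) (hn : 2 ≤ n) (hh : 1 ≤ h) :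
    (Kh n h ∩ {x : Fin n → ℝ | x ⟨n - 1, Nat.sub_lt (by omega) Nat.one_pos⟩ = 0}) ∩
        {x : Fin n → ℝ | ∀ i, ∃ z : ℤ, x i = (z : ℝ)} =
      ↑(cubeF n (fun i => (i:ℕ) < n - 1)) := by
  have hre : (Kh n h ∩ {x : Fin n → ℝ | x ⟨n - 1, by omega⟩ = 0}) ∩
        {x : Fin n → ℝ | ∀ i, ∃ z : ℤ, x i = (z : ℝ)} =
      (Kh n h ∩ {x : Fin n → ℝ | ∀ i, ∃ z : ℤ, x i = (z : ℝ)}) ∩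
        {x : Fin n → ℝ | x ⟨n - 1, by omega⟩ = 0} := by
    ext x; simp only [Set.mem_inter_iff, Set.mem_setOf_eq]; tauto
  rw [hre, lat_eq n h hn hh]
  ext x
  simp only [Finset.coe_union, Set.mem_union, Finset.mem_coe, Set.mem_inter_iff,
    Set.mem_setOf_eq]
  constructor
  · rintro ⟨hc | ha, hl⟩
    · exact hc
    · exfalso
      obtain ⟨z, hz0, -, -, rfl⟩ := mem_apexF.mp ha
      have : (if ((⟨n - 1, by omega⟩ : Fin n) : ℕ) = n - 1 then (z:ℝ) else 0) = 0 := hl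
      rw [if_pos rfl] at this
      exact hz0 (by exact_mod_cast this)
  · intro hc
    exact ⟨Or.inl hc, (mem_cubeF.mp hc ⟨n - 1, by omega⟩).2 (by simp)⟩

lemma filter_lt_card (n : ℕ) (hn : 2 ≤ n) :
    (Finset.univ.filter fun i : Fin n => (i:ℕ) < n - 1).card = n - 1 := by
  have : (Finset.univ.filter fun i : Fin n => (i:ℕ) < n - 1) = Finset.Iio ⟨n-1, by omega⟩ := by
    ext j; simp [Fin.lt_def]
  rw [this, Fin.card_Iio]

lemma filter_lt_ne_card (n : ℕ) (hn : 2 ≤ n) (j : Fin n) (hj : (j:ℕ) < n - 1) :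
    (Finset.univ.filter fun i : Fin n => (i:ℕ) < n - 1 ∧ i ≠ j).card = n - 2 := by
  have he : (Finset.univ.filter fun i : Fin n => (i:ℕ) < n - 1 ∧ i ≠ j) =
      (Finset.univ.filter fun i : Fin n => (i:ℕ) < n - 1).erase j := by
    ext i
    simp only [Finset.mem_filter, Finset.mem_erase, Finset.mem_univ, true_and]
    tauto
  rw [he, Finset.card_erase_of_mem (by simp [hj]), filter_lt_card n hn]
  omega

/-- Lattice point counts for the double pyramid `K_h`: `#(K_h) = 3^{n-1} + 2h`,
`#(K_h ∩ eᵢ^⊥) = 3^{n-2} + 2h` for `i < n`, `#(K_h ∩ eₙ^⊥) = 3^{n-1}`, and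
consequently `#(K_h)^{n-1} / ∏ᵢ #(K_h ∩ eᵢ^⊥) → 3^{-(n-1)}` as `h → ∞`. -/
theorem double_pyramid_counts (n : ℕ) (hn : 2 ≤ n) :
    (∀ h : ℕ, 1 ≤ h →
      latCount (Kh n h) = 3 ^ (n - 1) + 2 * h ∧
      (∀ i : Fin n, (i : ℕ) < n - 1 →
        latCount (Kh n h ∩ {x : Fin n → ℝ | x i = 0}) = 3 ^ (n - 2) + 2 * h) ∧
      latCount (Kh n h ∩ {x : Fin n → ℝ | x ⟨n - 1, by omega⟩ = 0}) = 3 ^ (n - 1)) ∧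
    Filter.Tendsto
      (fun h : ℕ => (latCount (Kh n h) : ℝ) ^ (n - 1) /
        ∏ i : Fin n, (latCount (Kh n h ∩ {x : Fin n → ℝ | x i = 0}) : ℝ))
      Filter.atTop (nhds (((3 : ℝ) ^ (n - 1))⁻¹)) := by
  have counts : ∀ h : ℕ, 1 ≤ h →
      latCount (Kh n h) = 3 ^ (n - 1) + 2 * h ∧
      (∀ i : Fin n, (i : ℕ) < n - 1 →
        latCount (Kh n h ∩ {x : Fin n → ℝ | x i = 0}) = 3 ^ (n - 2) + 2 * h) ∧
      latCount (Kh n h ∩ {x : Fin n → ℝ | x ⟨n - 1, by omega⟩ = 0}) = 3 ^ (n - 1) := by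
    intro h hh
    refine ⟨?_, ?_, ?_⟩
    · rw [latCount, lat_eq n h hn hh, Set.ncard_coe_finset,
        Finset.card_union_of_disjoint (cubeF_disjoint_apexF n h hn _ (by simp)),
        cubeF_card, apexF_card n h hn, filter_lt_card n hn]
    · intro j hj
      rw [latCount, lat_eq_slice n h hn hh j hj, Set.ncard_coe_finset,
        Finset.card_union_of_disjoint (cubeF_disjoint_apexF n h hn _ (by simp)),
        cubeF_card, apexF_card n h hn, filter_lt_ne_card n hn j hj]
    · rw [latCount, lat_eq_last n h hn hh, Set.ncard_coe_finset, cubeF_card,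
        filter_lt_card n hn]
  refine ⟨counts, ?_⟩
  set A : ℝ := 3 ^ (n - 1) with hAdef
  set B : ℝ := 3 ^ (n - 2) with hBdef
  have hA : (0:ℝ) < A := by positivity
  have hB : (0:ℝ) < B := by positivity
  have hcore : Filter.Tendsto (fun h : ℕ => (A + 2*h) / (B + 2*h)) Filter.atTop (nhds 1) := by
    have h1 : Filter.Tendsto (fun h : ℕ => (A - B) / (B + 2*h)) Filter.atTop (nhds 0) := by
      apply Filter.Tendsto.const_div_atTop
      apply Filter.tendsto_atTop_add_const_left
      exact (tendsto_natCast_atTop_atTop (R := ℝ)).const_mul_atTop (by norm_num)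
    have h2 : Filter.Tendsto (fun h : ℕ => (A - B)/(B + 2*h) + 1) Filter.atTop (nhds (0 + 1)) :=
      h1.add tendsto_const_nhds
    rw [zero_add] at h2
    refine h2.congr fun h => ?_
    have hd : (0:ℝ) < B + 2*h := by positivity
    field_simp
    ring
  have hmain : Filter.Tendsto (fun h : ℕ => ((A + 2*h)/(B + 2*h))^(n-1) * A⁻¹)
      Filter.atTop (nhds A⁻¹) := by
    have := (hcore.pow (n-1)).mul_const A⁻¹
    simpa using this
  have hone : (Finset.univ.filter fun i : Fin n => ¬ (i:ℕ) < n - 1).card = 1 := by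
    have := Finset.card_filter_add_card_filter_not
      (s := (Finset.univ : Finset (Fin n))) (p := fun i : Fin n => (i:ℕ) < n - 1)
    rw [filter_lt_card n hn] at this
    simp only [Finset.card_univ, Fintype.card_fin] at this
    omega
  refine Filter.Tendsto.congr' ?_ hmain
  filter_upwards [Filter.eventually_ge_atTop 1] with h hh
  obtain ⟨c1, c2, c3⟩ := counts h hh
  have hprod : ∏ i : Fin n, (latCount (Kh n h ∩ {x : Fin n → ℝ | x i = 0}) : ℝ)
      = (B + 2*h) ^ (n-1) * A := by
    have hcount : ∀ i : Fin n, (latCount (Kh n h ∩ {x : Fin n → ℝ | x i = 0}) : ℝ)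
        = if (i:ℕ) < n - 1 then B + 2*h else A := by
      intro i
      by_cases hi : (i:ℕ) < n - 1
      · rw [if_pos hi, c2 i hi]; push_cast [hBdef]; ring
      · rw [if_neg hi]
        have hieq : i = (⟨n - 1, Nat.sub_lt (by linarith) Nat.one_pos⟩ : Fin n) :=
          Fin.ext (le_antisymm (Nat.le_pred_of_lt i.isLt) (Nat.le_of_not_lt hi))
        rw [hieq, hAdef]
        exact_mod_cast c3
    rw [Finset.prod_congr rfl (fun i _ => hcount i), Finset.prod_ite,
      Finset.prod_const, Finset.prod_const, filter_lt_card n hn]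
    rw [hone, pow_one]
  rw [hprod, c1]
  have hd : (0:ℝ) < B + 2*h := by positivity
  have hcast : ((3 ^ (n - 1) + 2 * h : ℕ) : ℝ) = A + 2*h := by push_cast [hAdef]; ring
  rw [hcast, div_pow]
  field_simp
end

section
/- Let n ≥ 2, let C_n = [-1,1]^n and let u = (1, 2, 4, …, 2^{n-1})ᵀ ∈ ℝ^n. Then #(C_n ∩ u^⊥) = 1 (the only lattice point of C_n on the hyperplane u^⊥ is the origin), while #(C_n ∩ {x ∈ ℝ^n : ⟨x, u⟩ = 1}) = n. -/
open scoped BigOperators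

/-- Integer solutions with digits in `{-1,0,1}` and weighted sum `c`. -/
def Sgn (n : ℕ) (c : ℤ) : Set (Fin n → ℤ) :=
  {f | (∀ i, |f i| ≤ 1) ∧ ∑ i, f i * 2 ^ (i : ℕ) = c}

lemma succ_sum (n : ℕ) (f : Fin (n + 1) → ℤ) :
    ∑ i, f i * 2 ^ (i : ℕ) = f 0 + 2 * ∑ i : Fin n, f i.succ * 2 ^ (i : ℕ) := by
  rw [Fin.sum_univ_succ, Finset.mul_sum]
  simp only [Fin.val_zero, pow_zero, mul_one, Fin.val_succ]
  congr 1
  apply Finset.sum_congr rfl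
  intro i _
  ring

lemma zero_case : ∀ (n : ℕ) (f : Fin n → ℤ), (∀ i, |f i| ≤ 1) →
    ∑ i, f i * 2 ^ (i : ℕ) = 0 → f = 0 := by
  intro n
  induction n with
  | zero => intro f _ _; funext i; exact absurd i.2 (by omega)
  | succ n ih =>
    intro f hb hs
    rw [succ_sum] at hs
    have hb0 : -1 ≤ f 0 ∧ f 0 ≤ 1 := abs_le.mp (hb 0)
    set S := ∑ i : Fin n, f i.succ * 2 ^ (i : ℕ) with hS
    have h0 : f 0 = 0 ∧ S = 0 := by omega
    have htail : (fun i : Fin n => f i.succ) = 0 :=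
      ih _ (fun i => hb i.succ) h0.2
    funext i
    refine Fin.cases ?_ (fun j => ?_) i
    · exact h0.1
    · exact congrFun htail j

lemma one_case : ∀ (n : ℕ) (f : Fin n → ℤ), (∀ i, |f i| ≤ 1) →
    ∑ i, f i * 2 ^ (i : ℕ) = 1 →
    ∃ k : Fin n, ∀ i : Fin n,
      f i = if (i : ℕ) = (k : ℕ) then 1 else if (i : ℕ) < (k : ℕ) then -1 else 0 := by
  intro n
  induction n with
  | zero => intro f _ hs; simp at hs
  | succ n ih =>
    intro f hb hs
    rw [succ_sum] at hs
    have hb0 : -1 ≤ f 0 ∧ f 0 ≤ 1 := abs_le.mp (hb 0)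
    set S := ∑ i : Fin n, f i.succ * 2 ^ (i : ℕ) with hS
    have hcases : (f 0 = 1 ∧ S = 0) ∨ (f 0 = -1 ∧ S = 1) := by omega
    rcases hcases with ⟨h0, hS0⟩ | ⟨h0, hS1⟩
    · have htail : (fun i : Fin n => f i.succ) = 0 :=
        zero_case n _ (fun i => hb i.succ) hS0
      refine ⟨0, fun i => ?_⟩
      refine Fin.cases ?_ (fun j => ?_) i
      · simpa using h0
      · have hz : f j.succ = 0 := by simpa using congrFun htail j
        rw [hz]; simp
    · obtain ⟨k, hk⟩ := ih (fun i => f i.succ) (fun i => hb i.succ) hS1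
      refine ⟨k.succ, fun i => ?_⟩
      refine Fin.cases ?_ (fun j => ?_) i
      · rw [h0]; simp
      · rw [hk j]; simp

/-- The canonical solutions at level 1. -/
def vsol (n : ℕ) (k : Fin n) : Fin n → ℤ :=
  fun i => if (i : ℕ) = (k : ℕ) then 1 else if (i : ℕ) < (k : ℕ) then -1 else 0

lemma vsol_mem (n : ℕ) (k : Fin n) : vsol n k ∈ Sgn n 1 := by
  constructor
  · intro i
    unfold vsol
    split_ifs <;> simp
  · have hrange : ∑ i : Fin n, vsol n k i * 2 ^ (i : ℕ)
        = ∑ i ∈ Finset.range n,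
            ((if i = (k : ℕ) then (1 : ℤ) else if i < (k : ℕ) then -1 else 0) * 2 ^ i) :=
      Fin.sum_univ_eq_sum_range
        (fun i => ((if i = (k : ℕ) then (1 : ℤ) else if i < (k : ℕ) then -1 else 0) * 2 ^ i)) n
    rw [hrange]
    have hsub : ∑ i ∈ Finset.range n,
          ((if i = (k : ℕ) then (1 : ℤ) else if i < (k : ℕ) then -1 else 0) * 2 ^ i)
        = ∑ i ∈ Finset.range ((k : ℕ) + 1),
            ((if i = (k : ℕ) then (1 : ℤ) else if i < (k : ℕ) then -1 else 0) * 2 ^ i) := by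
      refine (Finset.sum_subset ?_ ?_).symm
      · intro i hi
        simp only [Finset.mem_range] at *
        have := k.2
        omega
      · intro i _ hi
        simp only [Finset.mem_range] at hi
        have h1 : ¬ (i = (k : ℕ)) := by omega
        have h2 : ¬ (i < (k : ℕ)) := by omega
        simp [h1, h2]
    rw [hsub, Finset.sum_range_succ]
    have hgeom : ∑ i ∈ Finset.range (k : ℕ), (2 : ℤ) ^ i = 2 ^ (k : ℕ) - 1 := by
      have := geom_sum_mul (2 : ℤ) (k : ℕ)
      simpa using this
    have hcong : ∑ i ∈ Finset.range (k : ℕ),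
          ((if i = (k : ℕ) then (1 : ℤ) else if i < (k : ℕ) then -1 else 0) * 2 ^ i)
        = ∑ i ∈ Finset.range (k : ℕ), (-(2 : ℤ) ^ i) := by
      apply Finset.sum_congr rfl
      intro i hi
      simp only [Finset.mem_range] at hi
      have h1 : ¬ (i = (k : ℕ)) := by omega
      simp [h1, hi]
    rw [hcong, Finset.sum_neg_distrib, hgeom]
    simp

lemma vsol_inj (n : ℕ) : Function.Injective (vsol n) := by
  intro a b h
  by_cases hab : (a : ℕ) = (b : ℕ)
  · exact Fin.ext hab
  · exfalso
    have := congrFun h a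
    unfold vsol at this
    rw [if_pos rfl, if_neg hab] at this
    split_ifs at this <;> omega

lemma sgn_one (n : ℕ) : Sgn n 1 = Set.range (vsol n) := by
  ext f
  constructor
  · rintro ⟨hb, hs⟩
    obtain ⟨k, hk⟩ := one_case n f hb hs
    exact ⟨k, funext fun i => (hk i).symm⟩
  · rintro ⟨k, rfl⟩
    exact vsol_mem n k

lemma sgn_zero (n : ℕ) : Sgn n 0 = {0} := by
  ext f
  constructor
  · rintro ⟨hb, hs⟩
    exact zero_case n f hb hs
  · rintro rfl
    exact ⟨fun i => by simp, by simp⟩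

/-- The cast map from integer vectors to real vectors. -/
def castMap (n : ℕ) : (Fin n → ℤ) → (Fin n → ℝ) := fun f i => (f i : ℝ)

lemma castMap_inj (n : ℕ) : Function.Injective (castMap n) := by
  intro f g h
  funext i
  have := congrFun h i
  simp only [castMap] at this
  exact_mod_cast this

lemma latCount_slice (n : ℕ) (c : ℤ) :
    latCount ({x : Fin n → ℝ | ∀ i, |x i| ≤ 1} ∩
        {x : Fin n → ℝ | ∑ i, x i * 2 ^ (i : ℕ) = (c : ℝ)}) = (Sgn n c).ncard := by
  unfold latCount
  have hset : ({x : Fin n → ℝ | ∀ i, |x i| ≤ 1} ∩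
        {x : Fin n → ℝ | ∑ i, x i * 2 ^ (i : ℕ) = (c : ℝ)}) ∩
        {x : Fin n → ℝ | ∀ i, ∃ z : ℤ, x i = (z : ℝ)} = castMap n '' Sgn n c := by
    ext x
    constructor
    · rintro ⟨⟨hb, hs⟩, hz⟩
      choose f hf using hz
      refine ⟨f, ⟨fun i => ?_, ?_⟩, funext fun i => (hf i).symm⟩
      · have : |(f i : ℝ)| ≤ 1 := by rw [← hf i]; exact hb i
        exact_mod_cast this
      · have : ∑ i, (f i : ℝ) * 2 ^ (i : ℕ) = (c : ℝ) := by
          rw [← hs]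
          exact Finset.sum_congr rfl fun i _ => by rw [hf i]
        exact_mod_cast this
    · rintro ⟨f, ⟨hb, hs⟩, rfl⟩
      refine ⟨⟨fun i => ?_, ?_⟩, fun i => ⟨f i, rfl⟩⟩
      · show |(f i : ℝ)| ≤ 1
        exact_mod_cast hb i
      · show ∑ i, (f i : ℝ) * 2 ^ (i : ℕ) = (c : ℝ)
        exact_mod_cast hs
  rw [hset, Set.ncard_image_of_injective _ (castMap_inj n)]

/-- For the cube `C_n = [-1,1]^n` and `u = (1, 2, 4, …, 2^{n-1})`, the central slice
`C_n ∩ u^⊥` contains only the origin as a lattice point, while the parallel slice at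
level `1` contains exactly `n` lattice points. -/
theorem cube_skew_slices (n : ℕ) (hn : 2 ≤ n) :
    latCount ({x : Fin n → ℝ | ∀ i, |x i| ≤ 1} ∩
        {x : Fin n → ℝ | ∑ i, x i * 2 ^ (i : ℕ) = 0}) = 1 ∧
    latCount ({x : Fin n → ℝ | ∀ i, |x i| ≤ 1} ∩
        {x : Fin n → ℝ | ∑ i, x i * 2 ^ (i : ℕ) = 1}) = n := by
  have e0 := latCount_slice n 0
  have e1 := latCount_slice n 1
  norm_num at e0 e1
  constructor
  · rw [e0, sgn_zero]
    exact Set.ncard_singleton _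
  · rw [e1, sgn_one, ← Set.image_univ,
      Set.ncard_image_of_injective _ (vsol_inj n), Set.ncard_univ]
    simp
end
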